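/- arXiv:1007.1186 — 2 statements merged into one kernel-verified Lean document; each statement's English description precedes it below -/
import Mathlib

section
/- Let (X, d, μ) be a metric measure space of homogeneous type with finite diameter, and suppose μ is upper Ahlfors γ-regular: μ(B(x,r)) ≤ b r^γ for all x ∈ X and 0 < r < diam X, where b, γ > 0. Then there is a constant c > 0 depending only on b, γ and the doubling constant of μ (and not on p or λ) such that for every 1 < p < ∞ and every 0 ≤ λ < 1: ‖𝓜f‖_{L^{p,λ}} ≤ c ((p/(p−1))^{1/p} + 1) ‖f‖_{L^{p,λ}} for all measurable f, where 𝓜f(x) := sup_{0<r<diam X} r^{−γ} ∫_{B(x,r)} |f| dμ is the fractional-type maximal operator. -/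
open MeasureTheory Metric ENNReal Set

set_option linter.unusedVariables false
set_option linter.unusedSectionVars false
set_option maxHeartbeats 1000000


section Aux
variable {X : Type*} [MetricSpace X] [MeasurableSpace X] [OpensMeasurableSpace X]

lemma lsc_measure_ball (ν : Measure X) (r : ℝ) :
    LowerSemicontinuous fun x => ν (ball x r) := by
  intro x c hc
  rcases le_or_gt r 0 with hr | hr
  · simp [ball_eq_empty.2 hr] at hc
  · have hU : ball x r = ⋃ n : ℕ, ball x (r - r / (n + 2)) := by
      ext y
      simp only [mem_ball, mem_iUnion]
      constructor
      · intro hy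
        obtain ⟨n, hn⟩ := exists_nat_gt (r / (r - dist y x))
        refine ⟨n, ?_⟩
        have hrd : 0 < r - dist y x := by linarith
        have h2 : r / (n + 2) < r - dist y x := by
          rw [div_lt_iff₀ (by positivity)]
          have : r / (r - dist y x) < (n : ℝ) + 2 := by linarith
          calc r = (r / (r - dist y x)) * (r - dist y x) := by field_simp
          _ < ((n : ℝ) + 2) * (r - dist y x) :=
            mul_lt_mul_of_pos_right this hrd
          _ = (r - dist y x) * ((n : ℝ) + 2) := mul_comm _ _
        linarith
      · rintro ⟨n, hn⟩
        have : 0 < r / (n + 2) := by positivity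
        linarith
    have hdir : Directed (· ⊆ ·) fun n : ℕ => ball x (r - r / (n + 2)) := by
      intro m n
      refine ⟨max m n, ball_subset_ball ?_, ball_subset_ball ?_⟩ <;>
      · have h1 : (0:ℝ) < r := hr
        gcongr <;> simp [Nat.cast_le] <;> positivity
    simp only [] at hc
    rw [hU, hdir.measure_iUnion] at hc
    obtain ⟨n, hn⟩ := lt_iSup_iff.mp hc
    have hlt : r - r / (n + 2) < r := by
      have : 0 < r / (n + 2) := by positivity
      linarith
    have hmem : ball x (r - (r - r / (n + 2))) ∈ nhds x :=
      ball_mem_nhds x (by linarith)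
    filter_upwards [hmem] with x' hx'
    refine hn.trans_le (measure_mono fun y hy => ?_)
    have : dist y x' ≤ dist y x + dist x x' := dist_triangle y x x'
    rw [mem_ball] at *
    rw [dist_comm x x'] at this
    linarith [hx', hy]

lemma measurable_measure_ball' (ν : Measure X) (r : ℝ) :
    Measurable fun x => ν (ball x r) :=
  (lsc_measure_ball ν r).measurable

lemma measurable_lintegral_ball (μ : Measure X) {g : X → ℝ≥0∞} (hg : Measurable g) (r : ℝ) :
    Measurable fun x => ∫⁻ y in ball x r, g y ∂μ := by
  have : (fun x => ∫⁻ y in ball x r, g y ∂μ) = fun x => (μ.withDensity g) (ball x r) := by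
    funext x
    rw [withDensity_apply _ measurableSet_ball]
  rw [this]
  exact measurable_measure_ball' _ r

end Aux


lemma rpow_le_lintegral_Ioi {p : ℝ} (hp : 1 < p) (c : ℝ≥0∞) :
    c ^ p ≤ ∫⁻ t in Ioi (0:ℝ),
      ENNReal.ofReal (p * t ^ (p-1)) * ({s : ℝ | ENNReal.ofReal s < c}).indicator (fun _ => 1) t := by
  have hp0 : (0:ℝ) < p := by linarith
  rcases eq_or_ne c 0 with rfl | hc0
  · simp [ENNReal.zero_rpow_of_pos hp0]
  rcases eq_or_ne c ⊤ with rfl | hctop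
  · rw [ENNReal.top_rpow_of_pos hp0]
    rw [top_le_iff, eq_top_iff]
    calc (⊤:ℝ≥0∞) = ENNReal.ofReal p * volume (Ioi (1:ℝ)) := by
          rw [Real.volume_Ioi, ENNReal.mul_top (ENNReal.ofReal_pos.mpr hp0).ne']
    _ = ∫⁻ t in Ioi (1:ℝ), ENNReal.ofReal p := by rw [setLIntegral_const]
    _ ≤ ∫⁻ t in Ioi (1:ℝ),
        ENNReal.ofReal (p * t ^ (p-1)) * ({s : ℝ | ENNReal.ofReal s < ⊤}).indicator (fun _ => 1) t := by
        refine setLIntegral_mono' measurableSet_Ioi fun t ht => ?_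
        have h1 : (1:ℝ) ≤ t ^ (p-1) := Real.one_le_rpow (le_of_lt ht) (by linarith)
        have : ENNReal.ofReal p ≤ ENNReal.ofReal (p * t ^ (p-1)) :=
          ENNReal.ofReal_le_ofReal (by nlinarith)
        simpa [Set.indicator_of_mem, mem_setOf_eq] using this
    _ ≤ _ := lintegral_mono_set fun t (ht : t ∈ Ioi (1:ℝ)) => (lt_trans zero_lt_one ht : (0:ℝ) < t)
  -- main case
  set s := c.toReal with hs
  have hs0 : 0 < s := ENNReal.toReal_pos hc0 hctop
  have hceq : c = ENNReal.ofReal s := (ENNReal.ofReal_toReal hctop).symm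
  have key : ∫⁻ t in Ioo (0:ℝ) s, ENNReal.ofReal (p * t ^ (p-1)) = ENNReal.ofReal (s ^ p) := by
    have hint : IntegrableOn (fun t : ℝ => p * t ^ (p-1)) (Ioo 0 s) volume := by
      have := (intervalIntegral.intervalIntegrable_rpow' (show (-1:ℝ) < p - 1 by linarith)
        (a := 0) (b := s))
      rw [intervalIntegrable_iff, uIoc_of_le hs0.le] at this
      exact (this.mono_set Ioo_subset_Ioc_self).const_mul p
    rw [← ofReal_integral_eq_lintegral_ofReal hint]
    · congr 1
      rw [MeasureTheory.integral_const_mul, ← MeasureTheory.integral_Ioc_eq_integral_Ioo,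
        ← intervalIntegral.integral_of_le hs0.le,
        integral_rpow (Or.inl (by linarith : (-1:ℝ) < p - 1))]
      rw [Real.zero_rpow (by linarith : p - 1 + 1 ≠ 0)]
      rw [show p - 1 + 1 = p by ring, sub_zero]; field_simp
    · filter_upwards [ae_restrict_mem measurableSet_Ioo] with t ht
      have : 0 < t := ht.1
      positivity
  calc c ^ p = ENNReal.ofReal (s ^ p) := by
        rw [hceq, ENNReal.ofReal_rpow_of_pos hs0]
  _ = ∫⁻ t in Ioo (0:ℝ) s, ENNReal.ofReal (p * t ^ (p-1)) := key.symm
  _ = ∫⁻ t in Ioo (0:ℝ) s,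
        ENNReal.ofReal (p * t ^ (p-1)) * ({u : ℝ | ENNReal.ofReal u < c}).indicator (fun _ => 1) t := by
      refine setLIntegral_congr_fun measurableSet_Ioo (fun t ht => ?_)
      have : ENNReal.ofReal t < c := by
        rw [hceq]; exact ENNReal.ofReal_lt_ofReal_iff_of_nonneg ht.1.le |>.mpr ht.2
      simp [Set.indicator_of_mem, this]
  _ ≤ _ := lintegral_mono_set fun t ht => ht.1

lemma lintegral_Ioi_le_rpow {p : ℝ} (hp : 1 < p) (c : ℝ≥0∞) :
    (∫⁻ t in Ioi (0:ℝ),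
      ENNReal.ofReal (p * t ^ (p-2)) * ({s : ℝ | ENNReal.ofReal s < c}).indicator (fun _ => 1) t)
      ≤ ENNReal.ofReal (p / (p-1)) * c ^ (p-1) := by
  have hp0 : (0:ℝ) < p := by linarith
  rcases eq_or_ne c 0 with rfl | hc0
  · have : ∀ t : ℝ, ({s : ℝ | ENNReal.ofReal s < 0}).indicator (fun _ => (1:ℝ≥0∞)) t = 0 := by
      intro t; simp [Set.indicator_apply]
    simp only [this, mul_zero, lintegral_zero]
    exact zero_le
  rcases eq_or_ne c ⊤ with rfl | hctop
  · rw [ENNReal.top_rpow_of_pos (by linarith : (0:ℝ) < p - 1), ENNReal.mul_top]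
    · exact le_top
    · exact (ENNReal.ofReal_pos.mpr (div_pos hp0 (by linarith))).ne'
  set s := c.toReal with hs
  have hs0 : 0 < s := ENNReal.toReal_pos hc0 hctop
  have hceq : c = ENNReal.ofReal s := (ENNReal.ofReal_toReal hctop).symm
  calc (∫⁻ t in Ioi (0:ℝ), ENNReal.ofReal (p * t ^ (p-2)) * ({u : ℝ | ENNReal.ofReal u < c}).indicator (fun _ => 1) t)
      ≤ ∫⁻ t in Ioi (0:ℝ), (Ioo (0:ℝ) s).indicator (fun t => ENNReal.ofReal (p * t ^ (p-2))) t := by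
        refine setLIntegral_mono' measurableSet_Ioi fun t ht => ?_
        by_cases hts : t < s
        · have hmem : t ∈ Ioo (0:ℝ) s := ⟨ht, hts⟩
          rw [Set.indicator_of_mem hmem (fun t => ENNReal.ofReal (p * t ^ (p-2)))]
          calc ENNReal.ofReal (p * t ^ (p-2)) * _ ≤ ENNReal.ofReal (p * t ^ (p-2)) * 1 := by
                gcongr
                exact Set.indicator_le_self' (fun _ _ => zero_le_one) t
          _ = _ := mul_one _
        · have : ¬ (ENNReal.ofReal t < c) := by
            rw [hceq, not_lt]
            exact ENNReal.ofReal_le_ofReal (not_lt.mp hts)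
          rw [Set.indicator_of_notMem (by simpa using this), mul_zero]
          exact zero_le
  _ = ∫⁻ t in Ioo (0:ℝ) s, ENNReal.ofReal (p * t ^ (p-2)) := by
        rw [lintegral_indicator measurableSet_Ioo, Measure.restrict_restrict measurableSet_Ioo,
          inter_eq_self_of_subset_left Ioo_subset_Ioi_self]
  _ = ENNReal.ofReal (p / (p-1) * s ^ (p-1)) := by
        have hint : IntegrableOn (fun t : ℝ => p * t ^ (p-2)) (Ioo 0 s) volume := by
          have := (intervalIntegral.intervalIntegrable_rpow' (show (-1:ℝ) < p - 2 by linarith)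
            (a := 0) (b := s))
          rw [intervalIntegrable_iff, uIoc_of_le hs0.le] at this
          exact (this.mono_set Ioo_subset_Ioc_self).const_mul p
        rw [← ofReal_integral_eq_lintegral_ofReal hint]
        · congr 1
          rw [MeasureTheory.integral_const_mul, ← MeasureTheory.integral_Ioc_eq_integral_Ioo,
            ← intervalIntegral.integral_of_le hs0.le,
            integral_rpow (Or.inl (by linarith : (-1:ℝ) < p - 2))]
          rw [Real.zero_rpow (by linarith : p - 2 + 1 ≠ 0)]
          have : p - 2 + 1 = p - 1 := by ring
          rw [this]
          rw [sub_zero]; ring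
        · filter_upwards [ae_restrict_mem measurableSet_Ioo] with t ht
          have : 0 < t := ht.1
          positivity
  _ ≤ ENNReal.ofReal (p / (p-1)) * c ^ (p-1) := by
        have h1 : (0:ℝ) < p - 1 := by linarith
        rw [ENNReal.ofReal_mul (by positivity), hceq, ENNReal.ofReal_rpow_of_pos hs0]

lemma lintegral_rpow_le_layercake {X : Type*} [MeasurableSpace X] (μ : Measure X)
    [IsFiniteMeasure μ] {h : X → ℝ≥0∞} (hm : Measurable h) {A : Set X}
    {p : ℝ} (hp : 1 < p) :
    ∫⁻ x in A, h x ^ p ∂μ ≤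
      ∫⁻ t in Ioi (0:ℝ), ENNReal.ofReal (p * t ^ (p-1)) * μ (A ∩ {x | ENNReal.ofReal t < h x}) := by
  set G : X → ℝ → ℝ≥0∞ := fun x t =>
    ENNReal.ofReal (p * t ^ (p-1)) *
      ({q : X × ℝ | ENNReal.ofReal q.2 < h q.1}).indicator (fun _ => 1) (x, t) with hG
  have hSm : MeasurableSet {q : X × ℝ | ENNReal.ofReal q.2 < h q.1} :=
    measurableSet_lt (measurable_snd.ennreal_ofReal) (hm.comp measurable_fst)
  have hGm : Measurable (Function.uncurry G) := by
    apply Measurable.mul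
    · have : Measurable fun q : X × ℝ => ENNReal.ofReal (p * q.2 ^ (p-1)) := by fun_prop
      exact this
    · exact (measurable_const.indicator hSm)
  calc ∫⁻ x in A, h x ^ p ∂μ ≤ ∫⁻ x in A, ∫⁻ t in Ioi (0:ℝ), G x t ∂volume ∂μ := by
        refine lintegral_mono fun x => ?_
        refine (rpow_le_lintegral_Ioi hp (h x)).trans_eq (lintegral_congr fun t => ?_)
        by_cases ht : ENNReal.ofReal t < h x
        · simp [hG, Set.indicator_of_mem, ht, mem_setOf_eq]
        · simp [hG, Set.indicator_of_notMem, ht, mem_setOf_eq]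
  _ = ∫⁻ t in Ioi (0:ℝ), ∫⁻ x in A, G x t ∂μ ∂volume :=
        lintegral_lintegral_swap hGm.aemeasurable
  _ = ∫⁻ t in Ioi (0:ℝ), ENNReal.ofReal (p * t ^ (p-1)) * μ (A ∩ {x | ENNReal.ofReal t < h x}) := by
        refine lintegral_congr fun t => ?_
        have hsetm : MeasurableSet {x : X | ENNReal.ofReal t < h x} :=
          measurableSet_lt measurable_const hm
        calc ∫⁻ x in A, G x t ∂μ
            = ∫⁻ x in A, ENNReal.ofReal (p * t ^ (p-1)) *
                ({x : X | ENNReal.ofReal t < h x}).indicator (fun _ => 1) x ∂μ := by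
              refine lintegral_congr fun x => ?_
              by_cases hx : ENNReal.ofReal t < h x
              · simp [hG, Set.indicator_of_mem, hx, mem_setOf_eq]
              · simp [hG, Set.indicator_of_notMem, hx, mem_setOf_eq]
        _ = ENNReal.ofReal (p * t ^ (p-1)) *
              ∫⁻ x in A, ({x : X | ENNReal.ofReal t < h x}).indicator (fun _ => 1) x ∂μ :=
              lintegral_const_mul _ (measurable_const.indicator hsetm)
        _ = ENNReal.ofReal (p * t ^ (p-1)) * μ (A ∩ {x | ENNReal.ofReal t < h x}) := by
              have h1 : ∫⁻ x in A, ({x : X | ENNReal.ofReal t < h x}).indicator (fun _ => (1:ℝ≥0∞)) x ∂μ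
                  = (μ.restrict A) {x : X | ENNReal.ofReal t < h x} := lintegral_indicator_one hsetm
              rw [h1, Measure.restrict_apply hsetm, inter_comm]


lemma weak_type_maximal {X : Type*} [MetricSpace X] [MeasurableSpace X] [BorelSpace X]
    (μ : Measure X) [IsFiniteMeasure μ]
    (hball : ∀ (x : X) (r : ℝ), 0 < r → 0 < μ (ball x r) ∧ μ (ball x r) < ⊤)
    (Cμ : ℝ≥0∞)
    (hdouble : ∀ (x : X) (r : ℝ), 0 < r → μ (ball x (2 * r)) ≤ Cμ * μ (ball x r))
    {g : X → ℝ≥0∞} (hg : Measurable g) {r₀ : ℝ} (B0 : Set X)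
    {t : ℝ} (ht : 0 < t) :
    μ (B0 ∩ {x | ENNReal.ofReal t < ⨆ (q : ℚ) (_ : 0 < (q:ℝ)) (_ : (q:ℝ) < r₀),
        (μ (ball x (q:ℝ)))⁻¹ * ∫⁻ y in ball x (q:ℝ), g y ∂μ}) ≤
      Cμ^3 * 2 * (ENNReal.ofReal t)⁻¹ * ∫⁻ y in {y | ENNReal.ofReal t < 2 * g y}, g y ∂μ := by
  set τ := ENNReal.ofReal t with hτ
  have hτ0 : τ ≠ 0 := (ENNReal.ofReal_pos.mpr ht).ne'
  have hτt : τ ≠ ⊤ := ENNReal.ofReal_ne_top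
  have hτ20 : τ / 2 ≠ 0 := by
    simp only [ne_eq, ENNReal.div_eq_zero_iff, not_or]
    exact ⟨hτ0, by norm_num⟩
  have hτ2t : τ / 2 ≠ ⊤ := by
    rw [ENNReal.div_eq_inv_mul]
    exact ENNReal.mul_ne_top (by simp) hτt
  set S := {y : X | τ < 2 * g y} with hS
  have hSm : MeasurableSet S := measurableSet_lt measurable_const (measurable_const.mul hg)
  set E := B0 ∩ {x | τ < ⨆ (q : ℚ) (_ : 0 < (q:ℝ)) (_ : (q:ℝ) < r₀),
      (μ (ball x (q:ℝ)))⁻¹ * ∫⁻ y in ball x (q:ℝ), g y ∂μ} with hE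
  have hdouble3 : ∀ (x : X) (r : ℝ), 0 < r → μ (ball x (8 * r)) ≤ Cμ^3 * μ (ball x r) := by
    intro x r hr
    have h8 : (8:ℝ) * r = 2 * (2 * (2 * r)) := by ring
    calc μ (ball x (8 * r)) = μ (ball x (2 * (2 * (2 * r)))) := by rw [h8]
    _ ≤ Cμ * μ (ball x (2 * (2 * r))) := hdouble x _ (by linarith)
    _ ≤ Cμ * (Cμ * μ (ball x (2 * r))) := mul_le_mul_right (hdouble x _ (by linarith)) _
    _ ≤ Cμ * (Cμ * (Cμ * μ (ball x r))) :=
        mul_le_mul_right (mul_le_mul_right (hdouble x _ hr) _) _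
    _ = Cμ^3 * μ (ball x r) := by ring
  -- for each x in E, find a good radius
  have hex : ∀ x ∈ E, ∃ ρ : ℝ, (0 < ρ ∧ ρ < r₀) ∧
      (τ/2) * μ (ball x ρ) < ∫⁻ y in ball x ρ, S.indicator g y ∂μ := by
    intro x hx
    have hx2 := hx.2
    simp only [mem_setOf_eq, lt_iSup_iff] at hx2
    obtain ⟨q, hq0, hqr, hlt⟩ := hx2
    have hm := hball x q hq0
    have step1 : τ * μ (ball x (q:ℝ)) < ∫⁻ y in ball x (q:ℝ), g y ∂μ := by
      have h := (ENNReal.mul_lt_mul_iff_left hm.1.ne' hm.2.ne).mpr hlt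
      have heq : ((μ (ball x (q:ℝ)))⁻¹ * ∫⁻ y in ball x (q:ℝ), g y ∂μ) * μ (ball x (q:ℝ))
          = ∫⁻ y in ball x (q:ℝ), g y ∂μ := by
        rw [mul_comm, ← mul_assoc, ENNReal.mul_inv_cancel hm.1.ne' hm.2.ne, one_mul]
      rwa [heq] at h
    have step2 : ∫⁻ y in ball x (q:ℝ), g y ∂μ ≤
        (∫⁻ y in ball x (q:ℝ), S.indicator g y ∂μ) + (τ/2) * μ (ball x (q:ℝ)) := by
      calc ∫⁻ y in ball x (q:ℝ), g y ∂μ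
          ≤ ∫⁻ y in ball x (q:ℝ), (S.indicator g y + τ/2) ∂μ := by
            refine lintegral_mono fun y => ?_
            by_cases hy : y ∈ S
            · rw [Set.indicator_of_mem hy]; exact le_self_add
            · rw [Set.indicator_of_notMem hy]
              have : 2 * g y ≤ τ := not_lt.mp hy
              rw [zero_add]
              rw [ENNReal.le_div_iff_mul_le (Or.inl (by norm_num)) (Or.inl (by norm_num))]
              rwa [mul_comm]
      _ = (∫⁻ y in ball x (q:ℝ), S.indicator g y ∂μ) + (τ/2) * μ (ball x (q:ℝ)) := by
            rw [lintegral_add_right _ measurable_const, setLIntegral_const]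
    refine ⟨(q:ℝ), ⟨hq0, hqr⟩, ?_⟩
    by_contra hcon
    push_neg at hcon
    have : τ * μ (ball x (q:ℝ)) < τ * μ (ball x (q:ℝ)) := by
      calc τ * μ (ball x (q:ℝ)) < ∫⁻ y in ball x (q:ℝ), g y ∂μ := step1
      _ ≤ (∫⁻ y in ball x (q:ℝ), S.indicator g y ∂μ) + (τ/2) * μ (ball x (q:ℝ)) := step2
      _ ≤ (τ/2) * μ (ball x (q:ℝ)) + (τ/2) * μ (ball x (q:ℝ)) := add_le_add_left hcon _
      _ = τ * μ (ball x (q:ℝ)) := by rw [← add_mul, ENNReal.add_halves]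
    exact lt_irrefl _ this
  choose! ρ hρ1 hρ2 using hex
  obtain ⟨u, hu_sub, hu_disj, hu_cov⟩ :=
    Vitali.exists_disjoint_subfamily_covering_enlargement_closedBall E id ρ r₀
      (fun a ha => (hρ1 a ha).2.le) 4 (by norm_num)
  have hρu : ∀ i : ↥u, 0 < ρ (i : X) := fun i => (hρ1 _ (hu_sub i.2)).1
  have hdisj : Pairwise (Function.onFun Disjoint fun i : ↥u => ball (i : X) (ρ (i : X))) := by
    intro i j hij
    have := hu_disj i.2 j.2 (Subtype.coe_injective.ne hij)
    exact this.mono ball_subset_closedBall ball_subset_closedBall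
  have hu_cnt : u.Countable := by
    have h := MeasureTheory.Measure.countable_meas_pos_of_disjoint_iUnion (μ := μ)
      (As := fun i : ↥u => ball (i : X) (ρ (i : X))) (fun i => measurableSet_ball) hdisj
    have huniv : {i : ↥u | 0 < μ (ball (i : X) (ρ (i : X)))} = Set.univ :=
      eq_univ_of_forall fun i => (hball _ _ (hρu i)).1
    rw [huniv] at h
    have : Countable ↥u := countable_univ_iff.mp h
    exact Set.countable_coe_iff.mp this
  haveI : Countable ↥u := hu_cnt.to_subtype
  have hE_sub : E ⊆ ⋃ i : ↥u, ball (i : X) (5 * ρ (i : X)) := by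
    intro a ha
    obtain ⟨c, hcu, hcov⟩ := hu_cov a ha
    have h1 : a ∈ closedBall (id a) (ρ a) := mem_closedBall_self (hρ1 a ha).1.le
    have h2 : a ∈ closedBall (id c) (4 * ρ c) := hcov h1
    have h3 : closedBall c (4 * ρ c) ⊆ ball c (5 * ρ c) :=
      closedBall_subset_ball (by have := (hρ1 c (hu_sub hcu)).1; linarith)
    exact mem_iUnion.mpr ⟨⟨c, hcu⟩, h3 h2⟩
  calc μ E ≤ μ (⋃ i : ↥u, ball (i : X) (5 * ρ (i : X))) := measure_mono hE_sub
  _ ≤ ∑' i : ↥u, μ (ball (i : X) (5 * ρ (i : X))) := measure_iUnion_le _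
  _ ≤ ∑' i : ↥u, Cμ^3 * ((τ/2)⁻¹ * ∫⁻ y in ball (i : X) (ρ (i : X)), S.indicator g y ∂μ) := by
      refine ENNReal.tsum_le_tsum fun i => ?_
      have hρi := hρu i
      calc μ (ball (i : X) (5 * ρ (i : X))) ≤ μ (ball (i : X) (8 * ρ (i : X))) :=
            measure_mono (ball_subset_ball (by linarith))
      _ ≤ Cμ^3 * μ (ball (i : X) (ρ (i : X))) := hdouble3 _ _ hρi
      _ ≤ Cμ^3 * ((τ/2)⁻¹ * ∫⁻ y in ball (i : X) (ρ (i : X)), S.indicator g y ∂μ) := by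
          refine mul_le_mul_right ?_ _
          have hlt := hρ2 _ (hu_sub i.2)
          calc μ (ball (i : X) (ρ (i : X)))
              = (τ/2)⁻¹ * ((τ/2) * μ (ball (i : X) (ρ (i : X)))) := by
                rw [← mul_assoc, ENNReal.inv_mul_cancel hτ20 hτ2t, one_mul]
          _ ≤ (τ/2)⁻¹ * ∫⁻ y in ball (i : X) (ρ (i : X)), S.indicator g y ∂μ :=
                mul_le_mul_right hlt.le _
  _ = Cμ^3 * (τ/2)⁻¹ * ∑' i : ↥u, ∫⁻ y in ball (i : X) (ρ (i : X)), S.indicator g y ∂μ := by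
      rw [ENNReal.tsum_mul_left]
      conv_lhs => rw [show (fun i : ↥u => (τ/2)⁻¹ *
        ∫⁻ y in ball (i : X) (ρ (i : X)), S.indicator g y ∂μ) =
        fun i : ↥u => (τ/2)⁻¹ * ∫⁻ y in ball (i : X) (ρ (i : X)), S.indicator g y ∂μ from rfl]
      rw [ENNReal.tsum_mul_left, ← mul_assoc]
  _ ≤ Cμ^3 * (τ/2)⁻¹ * ∫⁻ y in {y | τ < 2 * g y}, g y ∂μ := by
      refine mul_le_mul_right ?_ _
      rw [← lintegral_iUnion (fun i => measurableSet_ball) hdisj]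
      calc ∫⁻ y in ⋃ i : ↥u, ball (i : X) (ρ (i : X)), S.indicator g y ∂μ
          ≤ ∫⁻ y, S.indicator g y ∂μ := lintegral_mono' Measure.restrict_le_self le_rfl
      _ = ∫⁻ y in S, g y ∂μ := lintegral_indicator hSm g
  _ = Cμ^3 * 2 * τ⁻¹ * ∫⁻ y in {y | τ < 2 * g y}, g y ∂μ := by
      congr 1
      rw [ENNReal.inv_div (Or.inr hτt) (Or.inr hτ0), div_eq_mul_inv, ← mul_assoc]

lemma near_strong_type {X : Type*} [MetricSpace X] [MeasurableSpace X] [BorelSpace X]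
    (μ : Measure X) [IsFiniteMeasure μ]
    (hball : ∀ (x : X) (r : ℝ), 0 < r → 0 < μ (ball x r) ∧ μ (ball x r) < ⊤)
    (Cμ : ℝ≥0∞) (hCμt : Cμ ≠ ⊤)
    (hdouble : ∀ (x : X) (r : ℝ), 0 < r → μ (ball x (2 * r)) ≤ Cμ * μ (ball x r))
    {g : X → ℝ≥0∞} (hg : Measurable g) {r₀ : ℝ} (B0 : Set X)
    {p : ℝ} (hp : 1 < p) :
    ∫⁻ x in B0, (⨆ (q : ℚ) (_ : 0 < (q:ℝ)) (_ : (q:ℝ) < r₀),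
        (μ (ball x (q:ℝ)))⁻¹ * ∫⁻ y in ball x (q:ℝ), g y ∂μ) ^ p ∂μ ≤
      Cμ^3 * (2:ℝ≥0∞)^p * ENNReal.ofReal (p / (p-1)) * ∫⁻ y, g y ^ p ∂μ := by
  set M : X → ℝ≥0∞ := fun x => ⨆ (q : ℚ) (_ : 0 < (q:ℝ)) (_ : (q:ℝ) < r₀),
      (μ (ball x (q:ℝ)))⁻¹ * ∫⁻ y in ball x (q:ℝ), g y ∂μ with hM
  have hMm : Measurable M := by
    refine Measurable.iSup fun q => Measurable.iSup fun _ => Measurable.iSup fun _ => ?_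
    exact ((measurable_measure_ball' μ _).inv).mul (measurable_lintegral_ball μ hg _)
  have hpair : MeasurableSet {q : ℝ × X | ENNReal.ofReal q.1 < 2 * g q.2} :=
    measurableSet_lt (measurable_fst.ennreal_ofReal) (measurable_const.mul (hg.comp measurable_snd))
  calc ∫⁻ x in B0, M x ^ p ∂μ
      ≤ ∫⁻ t in Ioi (0:ℝ), ENNReal.ofReal (p * t ^ (p-1)) *
          μ (B0 ∩ {x | ENNReal.ofReal t < M x}) :=
        lintegral_rpow_le_layercake μ hMm hp
  _ ≤ ∫⁻ t in Ioi (0:ℝ), Cμ^3 * 2 * (ENNReal.ofReal (p * t ^ (p-2)) *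
        ∫⁻ y in {y | ENNReal.ofReal t < 2 * g y}, g y ∂μ) := by
      refine setLIntegral_mono' measurableSet_Ioi fun t ht => ?_
      have ht' : (0:ℝ) < t := ht
      calc ENNReal.ofReal (p * t ^ (p-1)) * μ (B0 ∩ {x | ENNReal.ofReal t < M x})
          ≤ ENNReal.ofReal (p * t ^ (p-1)) * (Cμ^3 * 2 * (ENNReal.ofReal t)⁻¹ *
              ∫⁻ y in {y | ENNReal.ofReal t < 2 * g y}, g y ∂μ) :=
            mul_le_mul_right (weak_type_maximal μ hball Cμ hdouble hg B0 ht') _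
      _ = Cμ^3 * 2 * ((ENNReal.ofReal (p * t ^ (p-1)) * (ENNReal.ofReal t)⁻¹) *
              ∫⁻ y in {y | ENNReal.ofReal t < 2 * g y}, g y ∂μ) := by ring
      _ = Cμ^3 * 2 * (ENNReal.ofReal (p * t ^ (p-2)) *
              ∫⁻ y in {y | ENNReal.ofReal t < 2 * g y}, g y ∂μ) := by
            congr 2
            have hid : p * t ^ (p-1) = (p * t ^ (p-2)) * t := by
              have : t ^ (p-1) = t ^ (p-2) * t := by
                rw [show p - 1 = p - 2 + 1 by ring, Real.rpow_add_one ht'.ne' (p-2)]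
              rw [this]; ring
            rw [hid, ENNReal.ofReal_mul (by positivity), mul_assoc,
              ENNReal.mul_inv_cancel (ENNReal.ofReal_pos.mpr ht').ne' ENNReal.ofReal_ne_top,
              mul_one]
  _ = Cμ^3 * 2 * ∫⁻ t in Ioi (0:ℝ), (ENNReal.ofReal (p * t ^ (p-2)) *
        ∫⁻ y in {y | ENNReal.ofReal t < 2 * g y}, g y ∂μ) :=
      lintegral_const_mul' _ _ (by
        exact ENNReal.mul_ne_top (ENNReal.pow_ne_top hCμt) (by norm_num))
  _ = Cμ^3 * 2 * ∫⁻ t in Ioi (0:ℝ), ∫⁻ y, ENNReal.ofReal (p * t ^ (p-2)) *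
        ({q : ℝ × X | ENNReal.ofReal q.1 < 2 * g q.2}).indicator (fun _ => 1) (t, y) * g y ∂μ := by
      congr 1
      refine lintegral_congr fun t => ?_
      have hsm : MeasurableSet {y : X | ENNReal.ofReal t < 2 * g y} :=
        measurableSet_lt measurable_const (measurable_const.mul hg)
      calc ENNReal.ofReal (p * t ^ (p-2)) * ∫⁻ y in {y | ENNReal.ofReal t < 2 * g y}, g y ∂μ
          = ENNReal.ofReal (p * t ^ (p-2)) *
            ∫⁻ y, ({y : X | ENNReal.ofReal t < 2 * g y}).indicator g y ∂μ := by
            rw [lintegral_indicator hsm g]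
      _ = ∫⁻ y, ENNReal.ofReal (p * t ^ (p-2)) *
            ({y : X | ENNReal.ofReal t < 2 * g y}).indicator g y ∂μ :=
            (lintegral_const_mul _ (hg.indicator hsm)).symm
      _ = ∫⁻ y, ENNReal.ofReal (p * t ^ (p-2)) *
            ({q : ℝ × X | ENNReal.ofReal q.1 < 2 * g q.2}).indicator (fun _ => 1) (t, y) * g y ∂μ := by
            refine lintegral_congr fun y => ?_
            by_cases hy : ENNReal.ofReal t < 2 * g y
            · rw [Set.indicator_of_mem (show y ∈ {y | ENNReal.ofReal t < 2 * g y} from hy) g,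
                Set.indicator_of_mem (show (t,y) ∈ {q : ℝ × X | ENNReal.ofReal q.1 < 2 * g q.2} from hy)]
              rw [mul_one]
            · rw [Set.indicator_of_notMem (show y ∉ {y | ENNReal.ofReal t < 2 * g y} from hy) g,
                Set.indicator_of_notMem (show (t,y) ∉ {q : ℝ × X | ENNReal.ofReal q.1 < 2 * g q.2} from hy)]
              simp
  _ = Cμ^3 * 2 * ∫⁻ y, ∫⁻ t in Ioi (0:ℝ), ENNReal.ofReal (p * t ^ (p-2)) *
        ({q : ℝ × X | ENNReal.ofReal q.1 < 2 * g q.2}).indicator (fun _ => 1) (t, y) * g y ∂volume ∂μ := by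
      congr 1
      refine lintegral_lintegral_swap ?_
      apply Measurable.aemeasurable
      apply Measurable.mul
      · apply Measurable.mul
        · have : Measurable fun q : ℝ × X => ENNReal.ofReal (p * q.1 ^ (p-2)) := by fun_prop
          exact this
        · exact measurable_const.indicator hpair
      · exact hg.comp measurable_snd
  _ ≤ Cμ^3 * 2 * ∫⁻ y, (ENNReal.ofReal (p / (p-1)) * (2 * g y) ^ (p-1)) * g y ∂μ := by
      refine mul_le_mul_right (lintegral_mono fun y => ?_) _
      have heq : ∫⁻ t in Ioi (0:ℝ), ENNReal.ofReal (p * t ^ (p-2)) *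
          ({q : ℝ × X | ENNReal.ofReal q.1 < 2 * g q.2}).indicator (fun _ => 1) (t, y) * g y ∂volume
          = (∫⁻ t in Ioi (0:ℝ), ENNReal.ofReal (p * t ^ (p-2)) *
            ({s : ℝ | ENNReal.ofReal s < 2 * g y}).indicator (fun _ => 1) t ∂volume) * g y := by
        rw [← lintegral_mul_const _ (by
          exact (Measurable.ennreal_ofReal (by fun_prop)).mul (measurable_const.indicator
            (measurableSet_lt (measurable_id.ennreal_ofReal) measurable_const)))]
        refine lintegral_congr fun t => ?_
        by_cases hy : ENNReal.ofReal t < 2 * g y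
        · rw [Set.indicator_of_mem (show (t,y) ∈ _ from hy),
            Set.indicator_of_mem (show t ∈ {s : ℝ | ENNReal.ofReal s < 2 * g y} from hy)]
        · rw [Set.indicator_of_notMem (show (t,y) ∉ _ from hy),
            Set.indicator_of_notMem (show t ∉ {s : ℝ | ENNReal.ofReal s < 2 * g y} from hy)]
      rw [heq]
      exact mul_le_mul_left (lintegral_Ioi_le_rpow hp (2 * g y)) _
  _ = Cμ^3 * (2:ℝ≥0∞)^p * ENNReal.ofReal (p / (p-1)) * ∫⁻ y, g y ^ p ∂μ := by
      have hptwo : ∀ y, (ENNReal.ofReal (p / (p-1)) * (2 * g y) ^ (p-1)) * g y =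
          ENNReal.ofReal (p / (p-1)) * (2:ℝ≥0∞)^(p-1) * g y ^ p := by
        intro y
        rw [ENNReal.mul_rpow_of_nonneg _ _ (by linarith : (0:ℝ) ≤ p - 1)]
        have : g y ^ (p - 1) * g y = g y ^ p := by
          nth_rewrite 2 [← ENNReal.rpow_one (g y)]
          rw [← ENNReal.rpow_add_of_nonneg _ _
            (by linarith : (0:ℝ) ≤ p - 1) (by norm_num : (0:ℝ) ≤ 1)]
          norm_num
        calc ENNReal.ofReal (p / (p-1)) * ((2:ℝ≥0∞)^(p-1) * g y ^ (p-1)) * g y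
            = ENNReal.ofReal (p / (p-1)) * (2:ℝ≥0∞)^(p-1) * (g y ^ (p-1) * g y) := by ring
        _ = ENNReal.ofReal (p / (p-1)) * (2:ℝ≥0∞)^(p-1) * g y ^ p := by rw [this]
      simp only [hptwo]
      rw [lintegral_const_mul _ (hg.pow_const _)]
      have h2p : (2:ℝ≥0∞) * (2:ℝ≥0∞)^(p-1) = (2:ℝ≥0∞)^p := by
        nth_rewrite 1 [← ENNReal.rpow_one 2]
        rw [← ENNReal.rpow_add _ _ (by norm_num) (by norm_num)]
        norm_num
      calc Cμ^3 * 2 * (ENNReal.ofReal (p / (p-1)) * (2:ℝ≥0∞)^(p-1) * ∫⁻ y, g y ^ p ∂μ)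
          = Cμ^3 * ((2:ℝ≥0∞) * (2:ℝ≥0∞)^(p-1)) * ENNReal.ofReal (p / (p-1)) * ∫⁻ y, g y ^ p ∂μ := by
            ring
      _ = _ := by rw [h2p]

/-- The Morrey "norm" `‖g‖_{L^{p,λ}}` of an `ℝ≥0∞`-valued function `g`,
taken over balls of radius `0 < r < D`. -/
noncomputable def morreyNorm {X : Type*} [MetricSpace X] [MeasurableSpace X]
    (μ : Measure X) (D p lam : ℝ) (g : X → ℝ≥0∞) : ℝ≥0∞ :=
  ⨆ (x : X) (r : ℝ) (_ : 0 < r) (_ : r < D),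
    (μ (ball x r) ^ (-lam) * ∫⁻ y in ball x r, g y ^ p ∂μ) ^ (1 / p)

/-- The fractional-type maximal function `𝓜f(x) = sup_{0<r<D} r^{-γ} ∫_{B(x,r)} |f| dμ`. -/
noncomputable def fracMaximalFn {X : Type*} [MetricSpace X] [MeasurableSpace X]
    (μ : Measure X) (D γ : ℝ) (f : X → ℝ) (x : X) : ℝ≥0∞ :=
  ⨆ (r : ℝ) (_ : 0 < r) (_ : r < D),
    ENNReal.ofReal (r ^ (-γ)) * ∫⁻ y in ball x r, (‖f y‖₊ : ℝ≥0∞) ∂μ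

/-- Boundedness of the fractional-type maximal operator `𝓜` in Morrey spaces,
under upper Ahlfors `γ`-regularity of `μ`. -/
theorem fracMaximal_bounded_morrey
    {X : Type*} [MetricSpace X] [MeasurableSpace X] [BorelSpace X]
    (μ : Measure X) (D : ℝ) (hD : 0 < D)
    (hdiam : EMetric.diam (Set.univ : Set X) = ENNReal.ofReal D)
    (hball : ∀ (x : X) (r : ℝ), 0 < r → 0 < μ (ball x r) ∧ μ (ball x r) < ⊤)
    (Cμ : ℝ≥0∞) (hCμ : Cμ < ⊤)
    (hdouble : ∀ (x : X) (r : ℝ), 0 < r → μ (ball x (2 * r)) ≤ Cμ * μ (ball x r))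
    (b γ : ℝ) (hb : 0 < b) (hγ : 0 < γ)
    (hAhlfors : ∀ (x : X) (r : ℝ), 0 < r → r < D →
      μ (ball x r) ≤ ENNReal.ofReal (b * r ^ γ)) :
    ∃ c : ℝ, 0 < c ∧ ∀ p lam : ℝ, 1 < p → 0 ≤ lam → lam < 1 →
      ∀ f : X → ℝ, Measurable f →
      morreyNorm μ D p lam (fracMaximalFn μ D γ f) ≤
        ENNReal.ofReal (c * ((p / (p - 1)) ^ (1 / p) + 1)) *
          morreyNorm μ D p lam (fun y => (‖f y‖₊ : ℝ≥0∞)) := by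
  classical
  -- basic setup
  have hXne : Nonempty X := by
    by_contra h
    rw [not_nonempty_iff] at h
    rw [Set.univ_eq_empty_iff.mpr h, show EMetric.diam (∅ : Set X) = 0 from EMetric.diam_empty] at hdiam
    exact (ENNReal.ofReal_pos.mpr hD).ne' hdiam.symm
  obtain ⟨x₀⟩ := hXne
  have hdist : ∀ x y : X, dist x y ≤ D := by
    intro x y
    have h1 : edist x y ≤ EMetric.diam (univ : Set X) :=
      EMetric.edist_le_diam_of_mem trivial trivial
    rw [hdiam, edist_dist] at h1
    exact (ENNReal.ofReal_le_ofReal_iff hD.le).mp h1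
  have huniv : ∀ (z : X) (s : ℝ), D < s → (univ : Set X) ⊆ ball z s := by
    intro z s hs y _
    rw [mem_ball]
    exact lt_of_le_of_lt (hdist y z) hs
  haveI : IsFiniteMeasure μ := ⟨lt_of_le_of_lt
    (measure_mono (huniv x₀ (D+1) (by linarith))) (hball x₀ (D+1) (by linarith)).2⟩
  have hμuniv_pos : 0 < μ univ :=
    lt_of_lt_of_le (hball x₀ 1 one_pos).1 (measure_mono (subset_univ _))
  have hCμ1 : 1 ≤ Cμ := by
    by_contra hc
    push_neg at hc
    have hm := hball x₀ 1 one_pos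
    have h1 : μ (ball x₀ 1) ≤ Cμ * μ (ball x₀ 1) :=
      le_trans (measure_mono (ball_subset_ball (by norm_num))) (hdouble x₀ 1 one_pos)
    have h2 : Cμ * μ (ball x₀ 1) < 1 * μ (ball x₀ 1) :=
      (ENNReal.mul_lt_mul_iff_left hm.1.ne' hm.2.ne).mpr hc
    rw [one_mul] at h2
    exact absurd (lt_of_le_of_lt h1 h2) (lt_irrefl _)
  have hCμ0 : Cμ ≠ 0 := fun h => by rw [h] at hCμ1; simp at hCμ1
  have hdoubleN : ∀ (z : X) (k : ℕ) (r : ℝ), 0 < r →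
      μ (ball z ((2:ℝ)^k * r)) ≤ Cμ^k * μ (ball z r) := by
    intro z k
    induction k with
    | zero => intro r hr; simp
    | succ n ih =>
      intro r hr
      have h1 : (2:ℝ)^(n+1) * r = (2:ℝ)^n * (2*r) := by ring
      rw [h1, pow_succ]
      calc μ (ball z ((2:ℝ)^n * (2*r))) ≤ Cμ^n * μ (ball z (2*r)) := ih (2*r) (by linarith)
      _ ≤ Cμ^n * (Cμ * μ (ball z r)) := mul_le_mul_right (hdouble z r hr) _
      _ = Cμ^n * Cμ * μ (ball z r) := (mul_assoc _ _ _).symm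
  -- a finite net of balls of radius D/2 covering X
  have hsep_card : ∀ F : Finset X, (∀ x ∈ F, ∀ y ∈ F, x ≠ y → D/4 ≤ dist x y) →
      (F.card : ℝ≥0∞) ≤ Cμ^5 := by
    intro F hsep
    have hdisj : (F : Set X).PairwiseDisjoint (fun z => ball z (D/8)) := by
      intro a ha b hb hab
      refine Set.disjoint_left.mpr fun y hya hyb => ?_
      have h1 : dist a b ≤ dist a y + dist y b := dist_triangle a y b
      rw [mem_ball] at hya hyb
      rw [dist_comm a y] at h1
      have := hsep a ha b hb hab
      linarith
    have key : ∀ z ∈ F, μ univ ≤ Cμ^5 * μ (ball z (D/8)) := by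
      intro z hz
      calc μ univ ≤ μ (ball z ((2:ℝ)^5 * (D/8))) :=
            measure_mono (huniv z _ (by norm_num; linarith))
      _ ≤ Cμ^5 * μ (ball z (D/8)) := hdoubleN z 5 _ (by linarith)
    have hsum : (F.card : ℝ≥0∞) * μ univ ≤ Cμ^5 * μ univ := by
      calc (F.card : ℝ≥0∞) * μ univ = ∑ _z ∈ F, μ univ := by
            rw [Finset.sum_const, nsmul_eq_mul]
      _ ≤ ∑ z ∈ F, Cμ^5 * μ (ball z (D/8)) := Finset.sum_le_sum key
      _ = Cμ^5 * ∑ z ∈ F, μ (ball z (D/8)) := (Finset.mul_sum _ _ _).symm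
      _ = Cμ^5 * μ (⋃ z ∈ F, ball z (D/8)) := by
            rw [measure_biUnion_finset hdisj (fun z _ => measurableSet_ball)]
      _ ≤ Cμ^5 * μ univ := mul_le_mul_right (measure_mono (subset_univ _)) _
    exact (ENNReal.mul_le_mul_iff_left hμuniv_pos.ne' (measure_ne_top μ univ)).mp hsum
  obtain ⟨Fnet, hFnet⟩ : ∃ F : Finset X, (univ : Set X) ⊆ ⋃ z ∈ F, ball z (D/2) := by
    set n₀ : ℕ := ⌈(Cμ^5).toReal⌉₊ with hn₀
    have hbound : ∀ F : Finset X, (∀ x ∈ F, ∀ y ∈ F, x ≠ y → D/4 ≤ dist x y) → F.card ≤ n₀ := by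
      intro F hsep
      have h1 := hsep_card F hsep
      have h2 : ((F.card : ℝ≥0∞)).toReal ≤ (Cμ^5).toReal :=
        ENNReal.toReal_mono (ENNReal.pow_ne_top hCμ.ne) h1
      have h3 : ((F.card : ℝ≥0∞)).toReal = (F.card : ℝ) := by simp
      rw [h3] at h2
      exact_mod_cast h2.trans (Nat.le_ceil _)
    set A : Set ℕ := {n | ∃ F : Finset X, (∀ x ∈ F, ∀ y ∈ F, x ≠ y → D/4 ≤ dist x y) ∧ F.card = n}
      with hA
    have h0A : 0 ∈ A := ⟨∅, fun x hx => by simp at hx, by simp⟩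
    have hbddA : BddAbove A := ⟨n₀, fun n ⟨F, hF, hc⟩ => hc ▸ hbound F hF⟩
    have hmem := Nat.sSup_mem ⟨0, h0A⟩ hbddA
    obtain ⟨F, hFsep, hFcard⟩ := hmem
    refine ⟨F, fun x _ => ?_⟩
    by_contra hx
    simp only [mem_iUnion, mem_ball, not_exists] at hx
    push_neg at hx
    have hfar : ∀ z ∈ F, D/4 ≤ dist x z := fun z hz => le_trans (by linarith) (hx z hz)
    have hxF : x ∉ F := fun hxF => by
      have := hfar x hxF
      rw [dist_self] at this
      linarith
    have hsep' : ∀ a ∈ insert x F, ∀ c ∈ insert x F, a ≠ c → D/4 ≤ dist a c := by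
      intro a ha c hc hac
      rcases Finset.mem_insert.mp ha with rfl | ha' <;>
        rcases Finset.mem_insert.mp hc with rfl | hc'
      · exact absurd rfl hac
      · exact hfar c hc'
      · rw [dist_comm]; exact hfar a ha'
      · exact hFsep a ha' c hc' hac
    have hmem' : sSup A + 1 ∈ A :=
      ⟨insert x F, hsep', by rw [Finset.card_insert_of_notMem hxF, hFcard]⟩
    have := le_csSup hbddA hmem'
    omega

  -- constants
  set K' : ℝ≥0∞ := Cμ ⊔ ((Fnet.card : ℝ≥0∞) * Cμ^2) with hK'def
  have hK't : K' ≠ ⊤ := by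
    rw [hK'def]
    exact (max_lt hCμ (lt_top_iff_ne_top.mpr (ENNReal.mul_ne_top
      (ENNReal.natCast_ne_top _) (ENNReal.pow_ne_top hCμ.ne)))).ne
  have hK'1 : 1 ≤ K' := le_trans hCμ1 (le_max_left _ _)
  set cE : ℝ≥0∞ := 2 * ENNReal.ofReal b * Cμ^4 * K' + ENNReal.ofReal b with hcEdef
  have hcEt : cE ≠ ⊤ := by
    rw [hcEdef]
    refine ENNReal.add_ne_top.mpr ⟨?_, ENNReal.ofReal_ne_top⟩
    exact ENNReal.mul_ne_top (ENNReal.mul_ne_top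
      (ENNReal.mul_ne_top (by norm_num) ENNReal.ofReal_ne_top) (ENNReal.pow_ne_top hCμ.ne)) hK't
  have hcE0 : cE ≠ 0 := by
    rw [hcEdef]
    intro h
    rw [add_eq_zero] at h
    exact (ENNReal.ofReal_pos.mpr hb).ne' h.2
  have hcEpos : 0 < cE.toReal := ENNReal.toReal_pos hcE0 hcEt
  refine ⟨cE.toReal, hcEpos, ?_⟩
  intro p lam hp hlam0 hlam1 f hf
  have hp0 : (0:ℝ) < p := by linarith
  have hp1' : p ≠ 0 := hp0.ne'
  have hip : (0:ℝ) ≤ 1/p := by positivity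
  have hp' : (0:ℝ) < p/(p-1) := div_pos hp0 (by linarith)
  set P : ℝ≥0∞ := ENNReal.ofReal ((p/(p-1))^(1/p)) with hPdef
  set N : ℝ≥0∞ := morreyNorm μ D p lam (fun y => (‖f y‖₊ : ℝ≥0∞)) with hNdef
  have hφm : Measurable (fun y => (‖f y‖₊ : ℝ≥0∞)) := hf.nnnorm.coe_nnreal_ennreal
  have hRHS : ENNReal.ofReal (cE.toReal * ((p/(p-1))^(1/p) + 1)) = cE * (P + 1) := by
    rw [ENNReal.ofReal_mul ENNReal.toReal_nonneg, ENNReal.ofReal_toReal hcEt,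
      ENNReal.ofReal_add (Real.rpow_nonneg hp'.le _) zero_le_one, ENNReal.ofReal_one]
  rcases eq_or_ne N ⊤ with hN | hN
  · rw [hRHS, hN, ENNReal.mul_top]
    · exact le_top
    · intro h
      rw [mul_eq_zero] at h
      rcases h with h | h
      · exact hcE0 h
      · rw [add_eq_zero] at h
        exact one_ne_zero h.2
  -- Morrey bound on balls of radius < D
  have hMorrey : ∀ (z : X) (r : ℝ), 0 < r → r < D →
      ∫⁻ y in ball z r, (‖f y‖₊ : ℝ≥0∞) ^ p ∂μ ≤ μ (ball z r) ^ lam * N ^ p := by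
    intro z r hr hrD
    have hm := hball z r hr
    have hle : (μ (ball z r) ^ (-lam) * ∫⁻ y in ball z r, (‖f y‖₊ : ℝ≥0∞) ^ p ∂μ) ^ (1/p) ≤ N := by
      rw [hNdef, morreyNorm]
      exact le_iSup_of_le z (le_iSup_of_le r (le_iSup_of_le hr (le_iSup_of_le hrD le_rfl)))
    have h2 := ENNReal.rpow_le_rpow hle hp0.le
    rw [← ENNReal.rpow_mul, one_div, inv_mul_cancel₀ hp1', ENNReal.rpow_one] at h2
    calc ∫⁻ y in ball z r, (‖f y‖₊ : ℝ≥0∞) ^ p ∂μ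
        = μ (ball z r) ^ lam * (μ (ball z r) ^ (-lam) *
            ∫⁻ y in ball z r, (‖f y‖₊ : ℝ≥0∞) ^ p ∂μ) := by
          rw [← mul_assoc, ← ENNReal.rpow_add _ _ hm.1.ne' hm.2.ne]
          simp
    _ ≤ μ (ball z r) ^ lam * N ^ p := mul_le_mul_right h2 _
  -- bound on concentric double balls
  have hbiU : ∀ (F : Finset X) (s : X → Set X),
      ∫⁻ y in ⋃ z ∈ F, s z, (‖f y‖₊ : ℝ≥0∞) ^ p ∂μ ≤
        ∑ z ∈ F, ∫⁻ y in s z, (‖f y‖₊ : ℝ≥0∞) ^ p ∂μ := by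
    intro F s
    induction F using Finset.induction with
    | empty => simp
    | @insert a F ha ih =>
      rw [Finset.set_biUnion_insert, Finset.sum_insert ha]
      refine le_trans (lintegral_mono' (Measure.restrict_union_le _ _) le_rfl) ?_
      rw [lintegral_add_measure]
      exact add_le_add le_rfl ih
  have hSC : ∀ (z : X) (r₀ : ℝ), 0 < r₀ → r₀ < D →
      ∫⁻ y in ball z (2*r₀), (‖f y‖₊ : ℝ≥0∞) ^ p ∂μ ≤ K' * (μ (ball z r₀) ^ lam * N ^ p) := by
    intro z r₀ hr₀ hr₀D
    by_cases h2r : 2*r₀ < D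
    · calc ∫⁻ y in ball z (2*r₀), (‖f y‖₊ : ℝ≥0∞) ^ p ∂μ
          ≤ μ (ball z (2*r₀)) ^ lam * N ^ p := hMorrey z (2*r₀) (by linarith) h2r
      _ ≤ (Cμ * μ (ball z r₀)) ^ lam * N ^ p := by
          exact mul_le_mul_left (ENNReal.rpow_le_rpow (hdouble z r₀ hr₀) hlam0) _
      _ = Cμ ^ lam * (μ (ball z r₀) ^ lam) * N ^ p := by
          rw [ENNReal.mul_rpow_of_nonneg _ _ hlam0]
      _ ≤ Cμ * (μ (ball z r₀) ^ lam) * N ^ p := by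
          refine mul_le_mul_left (mul_le_mul_left ?_ _) _
          calc Cμ ^ lam ≤ Cμ ^ (1:ℝ) :=
                ENNReal.rpow_le_rpow_of_exponent_le hCμ1 hlam1.le
          _ = Cμ := ENNReal.rpow_one Cμ
      _ ≤ K' * (μ (ball z r₀) ^ lam * N ^ p) := by
          rw [← mul_assoc]
          exact mul_le_mul_left (mul_le_mul_left (le_max_left _ _) _) _
    · push_neg at h2r
      have hD2 : D/2 ≤ r₀ := by linarith
      have huu : μ univ ≤ Cμ^2 * μ (ball z r₀) := by
        calc μ univ ≤ μ (ball z ((2:ℝ)^2 * (D/2))) :=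
              measure_mono (huniv z _ (by norm_num; linarith))
        _ ≤ Cμ^2 * μ (ball z (D/2)) := hdoubleN z 2 _ (by linarith)
        _ ≤ Cμ^2 * μ (ball z r₀) := mul_le_mul_right (measure_mono (ball_subset_ball hD2)) _
      calc ∫⁻ y in ball z (2*r₀), (‖f y‖₊ : ℝ≥0∞) ^ p ∂μ
          ≤ ∫⁻ y in ⋃ w ∈ Fnet, ball w (D/2), (‖f y‖₊ : ℝ≥0∞) ^ p ∂μ :=
            lintegral_mono_set (subset_trans (subset_univ _) hFnet)
      _ ≤ ∑ w ∈ Fnet, ∫⁻ y in ball w (D/2), (‖f y‖₊ : ℝ≥0∞) ^ p ∂μ := hbiU Fnet _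
      _ ≤ ∑ w ∈ Fnet, μ univ ^ lam * N ^ p := by
          refine Finset.sum_le_sum fun w _ => ?_
          refine le_trans (hMorrey w (D/2) (by linarith) (by linarith)) ?_
          exact mul_le_mul_left
            (ENNReal.rpow_le_rpow (measure_mono (subset_univ _)) hlam0) _
      _ = (Fnet.card : ℝ≥0∞) * (μ univ ^ lam * N ^ p) := by
          rw [Finset.sum_const, nsmul_eq_mul]
      _ ≤ (Fnet.card : ℝ≥0∞) * ((Cμ^2 * μ (ball z r₀)) ^ lam * N ^ p) :=
          mul_le_mul_right (mul_le_mul_left (ENNReal.rpow_le_rpow huu hlam0) _) _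
      _ ≤ (Fnet.card : ℝ≥0∞) * (Cμ^2 * (μ (ball z r₀) ^ lam * N ^ p)) := by
          rw [ENNReal.mul_rpow_of_nonneg _ _ hlam0]
          refine mul_le_mul_right ?_ _
          rw [← mul_assoc]
          refine mul_le_mul_left (mul_le_mul_left ?_ _) _
          calc (Cμ^2) ^ lam ≤ (Cμ^2) ^ (1:ℝ) := by
                refine ENNReal.rpow_le_rpow_of_exponent_le ?_ hlam1.le
                calc (1:ℝ≥0∞) = 1 * 1 := (one_mul 1).symm
                _ ≤ Cμ * Cμ := mul_le_mul' hCμ1 hCμ1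
                _ = Cμ^2 := (sq Cμ).symm
          _ = Cμ^2 := ENNReal.rpow_one _
      _ ≤ K' * (μ (ball z r₀) ^ lam * N ^ p) := by
          rw [← mul_assoc]
          exact mul_le_mul_left (le_max_right _ _) _
  -- Hölder
  have hpq : p.HolderConjugate (p/(p-1)) := Real.HolderConjugate.conjExponent hp
  have hq : 1/(p/(p-1)) = (p-1)/p := one_div_div _ _
  have hHolder : ∀ (z : X) (r : ℝ),
      ∫⁻ y in ball z r, (‖f y‖₊ : ℝ≥0∞) ∂μ ≤
        (∫⁻ y in ball z r, (‖f y‖₊ : ℝ≥0∞) ^ p ∂μ) ^ (1/p) * μ (ball z r) ^ ((p-1)/p) := by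
    intro z r
    have h := ENNReal.lintegral_mul_le_Lp_mul_Lq (μ.restrict (ball z r)) hpq
      (f := fun y => ((‖f y‖₊ : ℝ≥0∞))) (g := fun _ => (1:ℝ≥0∞))
      hφm.aemeasurable aemeasurable_const
    simp only [Pi.mul_apply, mul_one, ENNReal.one_rpow, lintegral_one,
      Measure.restrict_apply_univ, hq] at h
    exact h
  -- per-ball estimate
  conv_lhs => rw [morreyNorm]
  refine iSup_le fun xc => iSup_le fun r₀ => iSup_le fun hr₀ => iSup_le fun hr₀D => ?_
  have hm0 := hball xc r₀ hr₀
  have hm0n : μ (ball xc r₀) ≠ 0 := hm0.1.ne'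
  have hm0t : μ (ball xc r₀) ≠ ⊤ := hm0.2.ne
  set g : X → ℝ≥0∞ := (ball xc (2*r₀)).indicator (fun y => (‖f y‖₊ : ℝ≥0∞)) with hgdef
  have hgm : Measurable g := hφm.indicator measurableSet_ball
  set M : X → ℝ≥0∞ := fun x => ⨆ (q : ℚ) (_ : 0 < (q:ℝ)) (_ : (q:ℝ) < r₀),
      (μ (ball x (q:ℝ)))⁻¹ * ∫⁻ y in ball x (q:ℝ), g y ∂μ with hMdef
  have hMm : Measurable M := by
    refine Measurable.iSup fun q => Measurable.iSup fun _ => Measurable.iSup fun _ => ?_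
    exact ((measurable_measure_ball' μ _).inv).mul (measurable_lintegral_ball μ hgm _)
  set θ : ℝ := (p - 1 + lam)/p with hθdef
  set cF : ℝ≥0∞ := ENNReal.ofReal (b ^ θ * r₀ ^ (γ*(lam-1)/p)) * N with hcFdef
  set c1 : ℝ≥0∞ := ENNReal.ofReal b * Cμ with hc1def
  have hc1t : c1 ≠ ⊤ := ENNReal.mul_ne_top ENNReal.ofReal_ne_top hCμ.ne
  -- pointwise bound
  have hpoint : ∀ x ∈ ball xc r₀, fracMaximalFn μ D γ f x ≤ c1 * M x + cF := by
    intro x hx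
    rw [fracMaximalFn]
    refine iSup_le fun r => iSup_le fun hr => iSup_le fun hrD => ?_
    by_cases hcase : r < r₀
    · -- near part
      have hsub : ball x r ⊆ ball xc (2*r₀) := by
        intro y hy
        rw [mem_ball] at *
        have := dist_triangle y x xc
        have hxx : dist x xc < r₀ := hx
        linarith
      have hgeq : ∫⁻ y in ball x r, (‖f y‖₊ : ℝ≥0∞) ∂μ = ∫⁻ y in ball x r, g y ∂μ := by
        refine setLIntegral_congr_fun measurableSet_ball (fun y hy => ?_)
        rw [hgdef, Set.indicator_of_mem (hsub hy)]
      obtain ⟨q, hq1, hq2⟩ := exists_rat_btwn (lt_min (by linarith : r < 2*r) hcase)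
      have hq0 : 0 < (q:ℝ) := hr.trans hq1
      have hqr₀ : (q:ℝ) < r₀ := lt_of_lt_of_le hq2 (min_le_right _ _)
      have hq2r : (q:ℝ) < 2*r := lt_of_lt_of_le hq2 (min_le_left _ _)
      have hmr := hball x r hr
      have hmq := hball x (q:ℝ) hq0
      have h1 : μ (ball x (q:ℝ)) ≤ Cμ * μ (ball x r) :=
        le_trans (measure_mono (ball_subset_ball hq2r.le)) (hdouble x r hr)
      have hinv : ENNReal.ofReal (r ^ (-γ)) ≤ ENNReal.ofReal b * (μ (ball x r))⁻¹ := by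
        have hA := hAhlfors x r hr hrD
        have hinv1 : (ENNReal.ofReal (b * r^γ))⁻¹ ≤ (μ (ball x r))⁻¹ :=
          ENNReal.inv_le_inv.mpr hA
        have heq : ENNReal.ofReal (r ^ (-γ)) = ENNReal.ofReal b * (ENNReal.ofReal (b * r^γ))⁻¹ := by
          rw [ENNReal.ofReal_mul hb.le, ENNReal.mul_inv
            (Or.inl (ENNReal.ofReal_pos.mpr hb).ne') (Or.inl ENNReal.ofReal_ne_top),
            ← mul_assoc, ENNReal.mul_inv_cancel (ENNReal.ofReal_pos.mpr hb).ne'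
              ENNReal.ofReal_ne_top, one_mul]
          rw [Real.rpow_neg hr.le, ENNReal.ofReal_inv_of_pos (Real.rpow_pos_of_pos hr γ)]
        rw [heq]
        exact mul_le_mul_right hinv1 _
      have hinv2 : (μ (ball x r))⁻¹ ≤ Cμ * (μ (ball x (q:ℝ)))⁻¹ := by
        calc (μ (ball x r))⁻¹ = Cμ * (Cμ⁻¹ * (μ (ball x r))⁻¹) := by
              rw [← mul_assoc, ENNReal.mul_inv_cancel hCμ0 hCμ.ne, one_mul]
        _ = Cμ * (Cμ * μ (ball x r))⁻¹ := by
              rw [ENNReal.mul_inv (Or.inl hCμ0) (Or.inl hCμ.ne)]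
        _ ≤ Cμ * (μ (ball x (q:ℝ)))⁻¹ := mul_le_mul_right (ENNReal.inv_le_inv.mpr h1) _
      calc ENNReal.ofReal (r ^ (-γ)) * ∫⁻ y in ball x r, (‖f y‖₊ : ℝ≥0∞) ∂μ
          = ENNReal.ofReal (r ^ (-γ)) * ∫⁻ y in ball x r, g y ∂μ := by rw [hgeq]
      _ ≤ (ENNReal.ofReal b * (μ (ball x r))⁻¹) * ∫⁻ y in ball x r, g y ∂μ :=
            mul_le_mul_left hinv _
      _ ≤ (ENNReal.ofReal b * (μ (ball x r))⁻¹) * ∫⁻ y in ball x (q:ℝ), g y ∂μ :=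
            mul_le_mul_right (lintegral_mono_set (ball_subset_ball hq1.le)) _
      _ ≤ (ENNReal.ofReal b * (Cμ * (μ (ball x (q:ℝ)))⁻¹)) * ∫⁻ y in ball x (q:ℝ), g y ∂μ :=
            mul_le_mul_left (mul_le_mul_right hinv2 _) _
      _ = c1 * ((μ (ball x (q:ℝ)))⁻¹ * ∫⁻ y in ball x (q:ℝ), g y ∂μ) := by
            rw [hc1def]; ring
      _ ≤ c1 * M x := by
            refine mul_le_mul_right ?_ _
            rw [hMdef]
            exact le_iSup_of_le q (le_iSup_of_le hq0 (le_iSup_of_le hqr₀ le_rfl))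
      _ ≤ c1 * M x + cF := le_self_add
    · -- far part
      push_neg at hcase
      have hmr := hball x r hr
      have hA := hAhlfors x r hr hrD
      have hT : ENNReal.ofReal (r ^ (-γ)) * ∫⁻ y in ball x r, (‖f y‖₊ : ℝ≥0∞) ∂μ ≤ cF := by
        calc ENNReal.ofReal (r ^ (-γ)) * ∫⁻ y in ball x r, (‖f y‖₊ : ℝ≥0∞) ∂μ
            ≤ ENNReal.ofReal (r ^ (-γ)) *
              ((∫⁻ y in ball x r, (‖f y‖₊ : ℝ≥0∞) ^ p ∂μ) ^ (1/p) * μ (ball x r) ^ ((p-1)/p)) :=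
              mul_le_mul_right (hHolder x r) _
        _ ≤ ENNReal.ofReal (r ^ (-γ)) *
              ((μ (ball x r) ^ lam * N ^ p) ^ (1/p) * μ (ball x r) ^ ((p-1)/p)) := by
              refine mul_le_mul_right (mul_le_mul_left
                (ENNReal.rpow_le_rpow (hMorrey x r hr hrD) hip) _) _
        _ = ENNReal.ofReal (r ^ (-γ)) * (μ (ball x r) ^ θ * N) := by
              congr 1
              rw [ENNReal.mul_rpow_of_nonneg _ _ hip, ← ENNReal.rpow_mul,
                ← ENNReal.rpow_mul, mul_one_div_cancel hp1', ENNReal.rpow_one]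
              rw [mul_assoc, mul_comm N _, ← mul_assoc,
                ← ENNReal.rpow_add _ _ hmr.1.ne' hmr.2.ne]
              congr 2
              rw [hθdef]; ring
        _ ≤ ENNReal.ofReal (r ^ (-γ)) * ((ENNReal.ofReal (b * r^γ)) ^ θ * N) := by
              refine mul_le_mul_right (mul_le_mul_left (ENNReal.rpow_le_rpow hA ?_) _) _
              rw [hθdef]
              exact div_nonneg (by linarith) hp0.le
        _ = ENNReal.ofReal (b ^ θ * r ^ (γ*(lam-1)/p)) * N := by
              rw [ENNReal.ofReal_rpow_of_pos (by positivity), ← mul_assoc,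
                ← ENNReal.ofReal_mul (Real.rpow_nonneg hr.le _)]
              congr 2
              rw [Real.mul_rpow hb.le (Real.rpow_nonneg hr.le γ), ← Real.rpow_mul hr.le]
              rw [← mul_assoc, mul_comm (r ^ (-γ)) _, mul_assoc, ← Real.rpow_add hr]
              congr 1
              rw [hθdef]; field_simp; ring
        _ ≤ cF := by
              rw [hcFdef]
              refine mul_le_mul_left (ENNReal.ofReal_le_ofReal ?_) _
              refine mul_le_mul_of_nonneg_left ?_ (Real.rpow_nonneg hb.le _)
              have he : γ*(lam-1)/p ≤ 0 := by
                apply div_nonpos_of_nonpos_of_nonneg _ hp0.le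
                exact mul_nonpos_of_nonneg_of_nonpos hγ.le (by linarith)
              calc r ^ (γ*(lam-1)/p) = (r ^ (-(γ*(lam-1)/p)))⁻¹ := by
                    rw [← Real.rpow_neg hr.le, neg_neg]
              _ ≤ (r₀ ^ (-(γ*(lam-1)/p)))⁻¹ := by
                    refine inv_anti₀ (Real.rpow_pos_of_pos hr₀ _) ?_
                    exact Real.rpow_le_rpow hr₀.le hcase (by linarith)
              _ = r₀ ^ (γ*(lam-1)/p) := by rw [← Real.rpow_neg hr₀.le, neg_neg]
      exact le_trans hT le_add_self
  -- Minkowski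
  have hmink : (∫⁻ x in ball xc r₀, fracMaximalFn μ D γ f x ^ p ∂μ)^(1/p) ≤
      (∫⁻ x in ball xc r₀, (c1 * M x) ^ p ∂μ)^(1/p) +
        (∫⁻ x in ball xc r₀, cF ^ p ∂μ)^(1/p) := by
    have hadd := ENNReal.lintegral_Lp_add_le (μ := μ.restrict (ball xc r₀))
      (f := fun x => c1 * M x) (g := fun _ => cF)
      ((measurable_const.mul hMm).aemeasurable) aemeasurable_const hp.le
    simp only [Pi.add_apply] at hadd
    refine le_trans ?_ hadd
    refine ENNReal.rpow_le_rpow (lintegral_mono_ae ?_) hip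
    filter_upwards [ae_restrict_mem measurableSet_ball] with x hx
    exact ENNReal.rpow_le_rpow (hpoint x hx) hp0.le
  -- rpow helpers
  have e2p : ((2:ℝ≥0∞)^p)^(1/p) = 2 := by
    rw [← ENNReal.rpow_mul, mul_one_div_cancel hp1', ENNReal.rpow_one]
  have eNp : (N^p)^(1/p) = N := by
    rw [← ENNReal.rpow_mul, mul_one_div_cancel hp1', ENNReal.rpow_one]
  have eml : (μ (ball xc r₀) ^ lam)^(1/p) = μ (ball xc r₀) ^ (lam/p) := by
    rw [← ENNReal.rpow_mul, mul_one_div]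
  have eP : (ENNReal.ofReal (p/(p-1)))^(1/p) = P := by
    rw [hPdef, ← ENNReal.ofReal_rpow_of_pos hp']
  -- L^p bound for g
  have hgp : ∫⁻ y, g y ^ p ∂μ ≤ K' * (μ (ball xc r₀) ^ lam * N ^ p) := by
    have hgeq : ∫⁻ y, g y ^ p ∂μ = ∫⁻ y in ball xc (2*r₀), (‖f y‖₊ : ℝ≥0∞) ^ p ∂μ := by
      rw [← lintegral_indicator measurableSet_ball]
      refine lintegral_congr fun y => ?_
      by_cases hy : y ∈ ball xc (2*r₀)
      · rw [hgdef]; simp [Set.indicator_of_mem hy]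
      · rw [hgdef]; simp [Set.indicator_of_notMem hy, ENNReal.zero_rpow_of_pos hp0]
    rw [hgeq]
    exact hSC xc r₀ hr₀ hr₀D
  have hX1 : (∫⁻ x in ball xc r₀, (c1 * M x) ^ p ∂μ)^(1/p) ≤
      c1 * ((Cμ^3*K')^(1/p) * (2 * (P * (μ (ball xc r₀) ^ (lam/p) * N)))) := by
    have h1 : ∫⁻ x in ball xc r₀, (c1 * M x) ^ p ∂μ
        = c1^p * ∫⁻ x in ball xc r₀, M x ^ p ∂μ := by
      have h2 : ∀ x, (c1 * M x)^p = c1^p * M x ^p := fun x =>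
        ENNReal.mul_rpow_of_nonneg _ _ hp0.le
      simp_rw [h2]
      exact lintegral_const_mul' _ _ (ENNReal.rpow_ne_top_of_nonneg hp0.le hc1t)
    rw [h1, ENNReal.mul_rpow_of_nonneg _ _ hip, ← ENNReal.rpow_mul,
      mul_one_div_cancel hp1', ENNReal.rpow_one]
    refine mul_le_mul_right ?_ _
    have h3 : ∫⁻ x in ball xc r₀, M x ^ p ∂μ ≤
        (Cμ^3*K') * ((2:ℝ≥0∞)^p * (ENNReal.ofReal (p/(p-1)) *
          (μ (ball xc r₀) ^ lam * N ^ p))) := by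
      refine le_trans (near_strong_type μ hball Cμ hCμ.ne hdouble hgm (ball xc r₀) hp) ?_
      calc Cμ^3 * (2:ℝ≥0∞)^p * ENNReal.ofReal (p/(p-1)) * ∫⁻ y, g y ^ p ∂μ
          ≤ Cμ^3 * (2:ℝ≥0∞)^p * ENNReal.ofReal (p/(p-1)) *
              (K' * (μ (ball xc r₀) ^ lam * N ^ p)) := mul_le_mul_right hgp _
      _ = (Cμ^3*K') * ((2:ℝ≥0∞)^p * (ENNReal.ofReal (p/(p-1)) *
              (μ (ball xc r₀) ^ lam * N ^ p))) := by ring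
    refine le_trans (ENNReal.rpow_le_rpow h3 hip) ?_
    rw [ENNReal.mul_rpow_of_nonneg _ _ hip, ENNReal.mul_rpow_of_nonneg _ _ hip,
      ENNReal.mul_rpow_of_nonneg _ _ hip, ENNReal.mul_rpow_of_nonneg _ _ hip,
      ENNReal.mul_rpow_of_nonneg _ _ hip, e2p, eP, eml, eNp]
  have hX2 : (∫⁻ x in ball xc r₀, cF ^ p ∂μ)^(1/p) = cF * μ (ball xc r₀) ^ (1/p) := by
    rw [setLIntegral_const, ENNReal.mul_rpow_of_nonneg _ _ hip, ← ENNReal.rpow_mul,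
      mul_one_div_cancel hp1', ENNReal.rpow_one]
  have hcFbound : cF * μ (ball xc r₀) ^ ((1-lam)/p) ≤ ENNReal.ofReal b * N := by
    calc cF * μ (ball xc r₀) ^ ((1-lam)/p)
        ≤ cF * (ENNReal.ofReal (b * r₀^γ)) ^ ((1-lam)/p) := by
          refine mul_le_mul_right (ENNReal.rpow_le_rpow (hAhlfors xc r₀ hr₀ hr₀D) ?_) _
          exact div_nonneg (by linarith) hp0.le
    _ = ENNReal.ofReal (b ^ θ * r₀ ^ (γ*(lam-1)/p) * (b * r₀^γ) ^ ((1-lam)/p)) * N := by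
          rw [hcFdef, ENNReal.ofReal_rpow_of_pos (by positivity)]
          rw [show ENNReal.ofReal (b ^ θ * r₀ ^ (γ*(lam-1)/p)) * N *
              ENNReal.ofReal ((b * r₀^γ) ^ ((1-lam)/p))
              = ENNReal.ofReal (b ^ θ * r₀ ^ (γ*(lam-1)/p)) *
                ENNReal.ofReal ((b * r₀^γ) ^ ((1-lam)/p)) * N from by ring,
            ← ENNReal.ofReal_mul (by positivity)]
    _ = ENNReal.ofReal b * N := by
          congr 2
          rw [Real.mul_rpow hb.le (Real.rpow_nonneg hr₀.le _), ← Real.rpow_mul hr₀.le]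
          rw [show b ^ θ * r₀ ^ (γ*(lam-1)/p) * (b ^ ((1-lam)/p) * r₀ ^ (γ*((1-lam)/p)))
              = (b ^ θ * b ^ ((1-lam)/p)) * (r₀ ^ (γ*(lam-1)/p) * r₀ ^ (γ*((1-lam)/p)))
            from by ring]
          rw [← Real.rpow_add hb, ← Real.rpow_add hr₀]
          rw [show θ + (1-lam)/p = 1 from by rw [hθdef]; field_simp; ring,
            show γ*(lam-1)/p + γ*((1-lam)/p) = 0 from by ring]
          rw [Real.rpow_one, Real.rpow_zero, mul_one]
  calc (μ (ball xc r₀) ^ (-lam) * ∫⁻ x in ball xc r₀, fracMaximalFn μ D γ f x ^ p ∂μ) ^ (1/p)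
      = μ (ball xc r₀) ^ (-(lam/p)) *
          (∫⁻ x in ball xc r₀, fracMaximalFn μ D γ f x ^ p ∂μ)^(1/p) := by
        rw [ENNReal.mul_rpow_of_nonneg _ _ hip, ← ENNReal.rpow_mul,
          show -lam * (1/p) = -(lam/p) from by ring]
  _ ≤ μ (ball xc r₀) ^ (-(lam/p)) * ((∫⁻ x in ball xc r₀, (c1 * M x) ^ p ∂μ)^(1/p)
        + (∫⁻ x in ball xc r₀, cF ^ p ∂μ)^(1/p)) := mul_le_mul_right hmink _
  _ ≤ μ (ball xc r₀) ^ (-(lam/p)) *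
        (c1 * ((Cμ^3*K')^(1/p) * (2 * (P * (μ (ball xc r₀) ^ (lam/p) * N))))
          + cF * μ (ball xc r₀) ^ (1/p)) :=
      mul_le_mul_right (add_le_add hX1 (le_of_eq hX2)) _
  _ = (c1 * (Cμ^3*K')^(1/p) * 2 * P * N) *
        (μ (ball xc r₀) ^ (-(lam/p)) * μ (ball xc r₀) ^ (lam/p))
        + cF * (μ (ball xc r₀) ^ (-(lam/p)) * μ (ball xc r₀) ^ (1/p)) := by ring
  _ = (c1 * (Cμ^3*K')^(1/p) * 2 * P * N) + cF * μ (ball xc r₀) ^ ((1-lam)/p) := by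
      rw [← ENNReal.rpow_add _ _ hm0n hm0t, ← ENNReal.rpow_add _ _ hm0n hm0t]
      rw [show -(lam/p) + lam/p = 0 from by ring,
        show -(lam/p) + 1/p = (1-lam)/p from by ring]
      rw [ENNReal.rpow_zero, mul_one]
  _ ≤ (2 * ENNReal.ofReal b * Cμ^4 * K') * P * N + ENNReal.ofReal b * N := by
      refine add_le_add ?_ hcFbound
      refine mul_le_mul_left (mul_le_mul_left ?_ _) _
      have h4 : (Cμ^3*K')^(1/p) ≤ Cμ^3*K' := by
        have hbase : (1:ℝ≥0∞) ≤ Cμ^3*K' := by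
          calc (1:ℝ≥0∞) = 1 * 1 := (one_mul 1).symm
          _ ≤ Cμ^3 * K' := by
              refine mul_le_mul' ?_ hK'1
              calc (1:ℝ≥0∞) = 1^3 := by norm_num
              _ ≤ Cμ^3 := pow_le_pow_left' hCμ1 3
        calc (Cμ^3*K')^(1/p) ≤ (Cμ^3*K')^(1:ℝ) :=
              ENNReal.rpow_le_rpow_of_exponent_le hbase (by rw [div_le_one hp0]; linarith)
        _ = Cμ^3*K' := ENNReal.rpow_one _
      calc c1 * (Cμ^3*K')^(1/p) * 2 ≤ c1 * (Cμ^3*K') * 2 :=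
            mul_le_mul_left (mul_le_mul_right h4 _) _
      _ = 2 * ENNReal.ofReal b * Cμ^4 * K' := by rw [hc1def]; ring
  _ ≤ cE * (P+1) * N := by
      rw [show (2 * ENNReal.ofReal b * Cμ^4 * K') * P * N + ENNReal.ofReal b * N
          = ((2 * ENNReal.ofReal b * Cμ^4 * K') * P + ENNReal.ofReal b) * N from by ring]
      refine mul_le_mul_left ?_ _
      rw [mul_add cE P 1, mul_one]
      refine add_le_add (mul_le_mul_left ?_ _) ?_
      · rw [hcEdef]; exact self_le_add_right _ _
      · rw [hcEdef]; exact le_add_self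
  _ = ENNReal.ofReal (cE.toReal * ((p/(p-1))^(1/p) + 1)) * N := by rw [hRHS]
end

section
/- Let (X, d, μ) be a metric measure space of homogeneous type with finite diameter D, with μ({x}) = 0 for every x ∈ X, with t ↦ μ(B(x,t)) continuous for every x ∈ X, and with B(x,R) \ B(x,r) ≠ ∅ for all x ∈ X and 0 < r < R < D. Let 1 < p < ∞, 0 ≤ λ < 1 and 0 < α < (1−λ)/p. Then there exist constants c > 0 (depending only on the doubling constant of μ) and C_α > 0 (depending only on α and the doubling constant of μ) such that for all x ∈ X and all measurable f with ‖f‖_{L^{p,λ}} < ∞: |T_α f(x)| ≤ c (C_α + p/(1−λ−αp)) (Mf(x))^{1 − pα/(1−λ)} ‖f‖_{L^{p,λ}}^{pα/(1−λ)} (a Hedberg-type pointwise estimate), where T_α f(x) := ∫_X f(y) μ(B(x, d(x,y)))^{α−1} dμ(y) and Mf(x) := sup_{0<r<D} μ(B(x,r))⁻¹ ∫_{B(x,r)} |f| dμ. -/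
open MeasureTheory Metric ENNReal Set

/-- The Hardy–Littlewood maximal function `Mf` over balls of radius `0 < r < D`. -/
noncomputable def maximalFn {X : Type*} [MetricSpace X] [MeasurableSpace X]
    (μ : Measure X) (D : ℝ) (f : X → ℝ) (x : X) : ℝ≥0∞ :=
  ⨆ (r : ℝ) (_ : 0 < r) (_ : r < D),
    (μ (ball x r))⁻¹ * ∫⁻ y in ball x r, (‖f y‖₊ : ℝ≥0∞) ∂μ

/-- The potential operator `T_α f(x) = ∫ f(y) μ(B(x,d(x,y)))^{α-1} dμ(y)`. -/
noncomputable def potentialT {X : Type*} [MetricSpace X] [MeasurableSpace X]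
    (μ : Measure X) (α : ℝ) (f : X → ℝ) (x : X) : ℝ :=
  ∫ y, f y * (μ (ball x (dist x y)) ^ (α - 1)).toReal ∂μ

set_option maxHeartbeats 2000000

lemma hedberg_aux_meas (c : ℝ) : Measurable fun s : ℝ => ENNReal.ofReal (s ^ c) := by
  measurability

lemma hedberg_aux_Ioi_rpow {t β : ℝ} (hβ : β < -1) (ht : 0 < t) :
    ∫⁻ s in Ioi t, ENNReal.ofReal (s ^ β) = ENNReal.ofReal (-t ^ (β + 1) / (β + 1)) := by
  rw [← integral_Ioi_rpow_of_lt hβ ht]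
  rw [MeasureTheory.ofReal_integral_eq_lintegral_ofReal
    (integrableOn_Ioi_rpow_of_lt hβ ht)]
  filter_upwards [self_mem_ae_restrict measurableSet_Ioi] with s hs
  exact Real.rpow_nonneg (le_of_lt (ht.trans hs)) β

lemma hedberg_aux_Ioc_rpow {T β : ℝ} (hβ : -1 < β) (hT : 0 < T) :
    ∫⁻ s in Ioc (0:ℝ) T, ENNReal.ofReal (s ^ β) =
      ENNReal.ofReal (T ^ (β + 1) / (β + 1)) := by
  have hint : IntegrableOn (fun s : ℝ => s ^ β) (Ioc 0 T) volume :=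
    (intervalIntegrable_iff_integrableOn_Ioc_of_le hT.le).1
      (intervalIntegral.intervalIntegrable_rpow' hβ (a := 0) (b := T))
  rw [← MeasureTheory.ofReal_integral_eq_lintegral_ofReal hint ?_]
  · congr 1
    have := integral_rpow (a := 0) (b := T) (Or.inl hβ)
    rw [intervalIntegral.integral_of_le hT.le] at this
    rw [this, Real.zero_rpow (by linarith : β + 1 ≠ 0)]
    ring
  · filter_upwards [self_mem_ae_restrict measurableSet_Ioc] with s hs
    exact Real.rpow_nonneg hs.1.le β

lemma hedberg_aux_layercake {a : ℝ≥0∞} (ha : a ≠ 0) (ha' : a ≠ ⊤) {α : ℝ} (hα : α < 1) :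
    a ^ (α - 1) = ENNReal.ofReal (1 - α) *
      ∫⁻ s in Ioi (0:ℝ), ENNReal.ofReal (s ^ (α - 2)) * (Ici a.toReal).indicator 1 s := by
  set t := a.toReal with hta
  have ht : 0 < t := ENNReal.toReal_pos ha ha'
  have h1 : ∀ s : ℝ, ENNReal.ofReal (s ^ (α - 2)) * (Ici t).indicator 1 s =
      (Ici t).indicator (fun s => ENNReal.ofReal (s ^ (α - 2))) s := by
    intro s
    by_cases h : s ∈ Ici t <;> simp [Set.indicator, h]
  simp_rw [h1]
  rw [lintegral_indicator measurableSet_Ici, Measure.restrict_restrict measurableSet_Ici,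
    show Ici t ∩ Ioi 0 = Ici t from
      Set.inter_eq_left.2 (fun s hs => lt_of_lt_of_le ht hs),
    show (volume.restrict (Ici t)) = volume.restrict (Ioi t) from
      (Measure.restrict_congr_set Ioi_ae_eq_Ici).symm,
    hedberg_aux_Ioi_rpow (by linarith) ht]
  rw [← ENNReal.ofReal_mul (by linarith)]
  have hane : (α - 2) + 1 = α - 1 := by ring
  rw [hane]
  have hne : α - 1 ≠ 0 := by linarith
  have : (1 - α) * (-t ^ (α - 1) / (α - 1)) = t ^ (α - 1) := by
    field_simp
    ring
  rw [this, ← ENNReal.ofReal_rpow_of_pos ht, ENNReal.ofReal_toReal ha']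

/-- Hedberg-type pointwise estimate for the potential operator `T_α` in terms of
the Hardy–Littlewood maximal function and the Morrey norm. -/
theorem hedberg_pointwise_estimate_potentialT
    {X : Type*} [MetricSpace X] [MeasurableSpace X] [BorelSpace X]
    (μ : Measure X) (D : ℝ) (hD : 0 < D)
    (hdiam : EMetric.diam (Set.univ : Set X) = ENNReal.ofReal D)
    (hball : ∀ (x : X) (r : ℝ), 0 < r → 0 < μ (ball x r) ∧ μ (ball x r) < ⊤)
    (Cμ : ℝ≥0∞) (hCμ : Cμ < ⊤)
    (hdouble : ∀ (x : X) (r : ℝ), 0 < r → μ (ball x (2 * r)) ≤ Cμ * μ (ball x r))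
    (hatom : ∀ x : X, μ {x} = 0)
    (hcont : ∀ x : X, Continuous fun t : ℝ => μ (ball x t))
    (hannuli : ∀ (x : X) (r R : ℝ), 0 < r → r < R → R < D →
      (ball x R \ ball x r).Nonempty) :
    ∃ c : ℝ, 0 < c ∧ ∀ α : ℝ, 0 < α → ∃ Cα : ℝ, 0 < Cα ∧
      ∀ p lam : ℝ, 1 < p → 0 ≤ lam → lam < 1 → α < (1 - lam) / p →
      ∀ f : X → ℝ, Measurable f →
        morreyNorm μ D p lam (fun y => (‖f y‖₊ : ℝ≥0∞)) < ⊤ →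
      ∀ x : X,
        (‖potentialT μ α f x‖₊ : ℝ≥0∞) ≤
          ENNReal.ofReal (c * (Cα + p / (1 - lam - α * p))) *
            (maximalFn μ D f x) ^ (1 - p * α / (1 - lam)) *
            (morreyNorm μ D p lam (fun y => (‖f y‖₊ : ℝ≥0∞)))
              ^ (p * α / (1 - lam)) := by
  refine ⟨1, one_pos, fun α hα => ⟨1/α, by positivity, ?_⟩⟩
  intro p lam hp hlam0 hlam1 hαp f hf hNtop x
  -- numerics
  have hp0 : (0:ℝ) < p := by linarith
  have h1lam : (0:ℝ) < 1 - lam := by linarith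
  have hαp' : α * p < 1 - lam := (lt_div_iff₀ hp0).1 hαp
  have hα1 : α < 1 := by nlinarith
  have hγ : (0:ℝ) < 1 - lam - α * p := by linarith
  set θ : ℝ := p * α / (1 - lam) with hθdef
  have hθ0 : 0 < θ := by positivity
  have hθ1 : θ < 1 := by
    rw [hθdef, div_lt_one h1lam]; nlinarith
  set q : ℝ := 1 - (1 - lam) / p with hqdef
  have hq0 : 0 < q := by
    rw [hqdef, sub_pos, div_lt_one hp0]; linarith
  set g : X → ℝ≥0∞ := fun y => (‖f y‖₊ : ℝ≥0∞) with hgdef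
  have hg : Measurable g := hf.nnnorm.coe_nnreal_ennreal
  set M : ℝ≥0∞ := maximalFn μ D f x with hMdef
  set N : ℝ≥0∞ := morreyNorm μ D p lam g with hNdef
  -- geometry
  have hdistD : ∀ y z : X, dist y z ≤ D := by
    intro y z
    have h := EMetric.edist_le_diam_of_mem (mem_univ y) (mem_univ z)
    have hdiam' : Metric.ediam (univ : Set X) = ENNReal.ofReal D := hdiam
    rw [hdiam', edist_dist] at h
    exact (ENNReal.ofReal_le_ofReal_iff hD.le).1 h
  have huniv : ∀ t : ℝ, D < t → ball x t = univ := by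
    intro t ht
    exact eq_univ_of_forall fun y => by
      rw [mem_ball]; exact lt_of_le_of_lt (hdistD y x) ht
  haveI : IsFiniteMeasure μ := by
    constructor
    rw [← huniv (D+1) (by linarith)]
    exact (hball x (D+1) (by linarith)).2
  have hμD : μ (ball x D) = μ univ := by
    have h1 : Filter.Tendsto (fun t : ℝ => μ (ball x t)) (nhdsWithin D (Ioi D))
        (nhds (μ (ball x D))) := ((hcont x).tendsto D).mono_left nhdsWithin_le_nhds
    have h2 : Filter.Tendsto (fun t : ℝ => μ (ball x t)) (nhdsWithin D (Ioi D))
        (nhds (μ univ)) := by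
      refine Filter.Tendsto.congr' ?_ tendsto_const_nhds
      filter_upwards [self_mem_nhdsWithin] with t ht
      exact (congrArg μ (huniv t ht)).symm
    exact tendsto_nhds_unique h1 h2
  -- exhausting sequence
  set u : ℕ → ℝ := fun n => D - D / (n + 2) with hudef
  have hu0 : ∀ n, 0 < u n := by
    intro n
    have : D / (n + 2) < D := by
      apply div_lt_self hD
      have h9 : (0:ℝ) ≤ (n:ℝ) := Nat.cast_nonneg n
      linarith
    simp only [hudef]; linarith
  have huD : ∀ n, u n < D := by
    intro n
    have : 0 < D / ((n:ℝ) + 2) := by positivity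
    simp only [hudef]; linarith
  have h_union : (⋃ n, ball x (u n)) = ball x D := by
    apply Subset.antisymm
    · exact iUnion_subset fun n => ball_subset_ball (huD n).le
    · intro y hy
      rw [mem_ball] at hy
      obtain ⟨n, hn⟩ := exists_nat_gt (D / (D - dist y x))
      refine mem_iUnion.2 ⟨n, ?_⟩
      rw [mem_ball]
      have h2 : 0 < D - dist y x := by linarith
      rw [div_lt_iff₀ h2] at hn
      have h3 : D / ((n:ℝ) + 2) < D - dist y x := by
        rw [div_lt_iff₀ (by positivity)]
        nlinarith
      simp only [hudef]; linarith
  -- maximal bound on balls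
  have hMle : ∀ r : ℝ, 0 < r → r < D → ∫⁻ y in ball x r, g y ∂μ ≤ M * μ (ball x r) := by
    intro r h1 h2
    have h3 : (μ (ball x r))⁻¹ * ∫⁻ y in ball x r, g y ∂μ ≤ M := by
      rw [hMdef, maximalFn]
      exact le_iSup_of_le r (le_iSup_of_le h1 (le_iSup_of_le h2 le_rfl))
    have h0 := (hball x r h1).1.ne'
    calc ∫⁻ y in ball x r, g y ∂μ
        = μ (ball x r) * ((μ (ball x r))⁻¹ * ∫⁻ y in ball x r, g y ∂μ) := by
          rw [← mul_assoc, ENNReal.mul_inv_cancel h0 (measure_ne_top μ _), one_mul]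
      _ ≤ μ (ball x r) * M := mul_le_mul_right h3 _
      _ = M * μ (ball x r) := mul_comm _ _
  -- Morrey bound on balls
  have hNle : ∀ r : ℝ, 0 < r → r < D → ∫⁻ y in ball x r, g y ∂μ ≤ N * μ (ball x r) ^ q := by
    intro r h1 h2
    have hμ0 := (hball x r h1).1.ne'
    have hμt := measure_ne_top μ (ball x r)
    have h3 : (μ (ball x r) ^ (-lam) * ∫⁻ y in ball x r, g y ^ p ∂μ) ^ (1/p) ≤ N := by
      rw [hNdef, morreyNorm]
      exact le_iSup_of_le x (le_iSup_of_le r (le_iSup_of_le h1 (le_iSup_of_le h2 le_rfl)))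
    have h4 : μ (ball x r) ^ (-lam) * ∫⁻ y in ball x r, g y ^ p ∂μ ≤ N ^ p := by
      have h := ENNReal.rpow_le_rpow h3 hp0.le
      rwa [← ENNReal.rpow_mul, one_div, inv_mul_cancel₀ hp0.ne', ENNReal.rpow_one] at h
    have h5 : ∫⁻ y in ball x r, g y ^ p ∂μ ≤ μ (ball x r) ^ lam * N ^ p := by
      calc ∫⁻ y in ball x r, g y ^ p ∂μ
          = μ (ball x r) ^ lam * (μ (ball x r) ^ (-lam) * ∫⁻ y in ball x r, g y ^ p ∂μ) := by
            rw [← mul_assoc, ← ENNReal.rpow_add _ _ hμ0 hμt, add_neg_cancel,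
              ENNReal.rpow_zero, one_mul]
        _ ≤ μ (ball x r) ^ lam * N ^ p := mul_le_mul_right h4 _
    set p' : ℝ := p / (p - 1) with hp'def
    have hpq : p.HolderConjugate p' := Real.HolderConjugate.conjExponent hp
    have hp'inv : 1 / p' = 1 - 1 / p := by
      rw [hp'def]
      field_simp
    have h6 : ∫⁻ y in ball x r, g y ∂μ ≤
        (∫⁻ y in ball x r, g y ^ p ∂μ) ^ (1/p) * μ (ball x r) ^ (1 - 1/p) := by
      have h := ENNReal.lintegral_mul_le_Lp_mul_Lq (μ.restrict (ball x r)) hpq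
        hg.aemeasurable (aemeasurable_const (b := (1:ℝ≥0∞)))
      simpa [ENNReal.one_rpow, lintegral_one, Measure.restrict_apply_univ, hp'inv] using h
    calc ∫⁻ y in ball x r, g y ∂μ
        ≤ (∫⁻ y in ball x r, g y ^ p ∂μ) ^ (1/p) * μ (ball x r) ^ (1 - 1/p) := h6
      _ ≤ (μ (ball x r) ^ lam * N ^ p) ^ (1/p) * μ (ball x r) ^ (1 - 1/p) :=
          mul_le_mul_left (ENNReal.rpow_le_rpow h5 (by positivity)) _
      _ = N * μ (ball x r) ^ q := by
          rw [ENNReal.mul_rpow_of_nonneg _ _ (by positivity : (0:ℝ) ≤ 1/p),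
            ← ENNReal.rpow_mul, ← ENNReal.rpow_mul, mul_one_div,
            show p * (1/p) = 1 by field_simp, ENNReal.rpow_one,
            mul_comm (μ (ball x r) ^ (lam / p)) N, mul_assoc,
            ← ENNReal.rpow_add _ _ hμ0 hμt,
            show lam / p + (1 - 1/p) = q by rw [hqdef]; ring]
  -- the zero case
  have hcomplD : μ (ball x D)ᶜ = 0 := by
    have h := measure_add_measure_compl (μ := μ) (measurableSet_ball (x := x) (ε := D))
    rw [hμD] at h
    nth_rewrite 2 [← add_zero (μ univ)] at h
    exact (ENNReal.add_right_inj (measure_ne_top μ _)).1 h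
  have hzero : (∀ n : ℕ, ∫⁻ y in ball x (u n), g y ∂μ = 0) → potentialT μ α f x = 0 := by
    intro h0
    have hgn : ∀ n, ∀ᵐ y ∂(μ.restrict (ball x (u n))), g y = 0 := fun n => by
      filter_upwards [(lintegral_eq_zero_iff hg).1 (h0 n)] with y hy
      simpa using hy
    have hn : ∀ n, μ ({y | f y ≠ 0} ∩ ball x (u n)) = 0 := by
      intro n
      have h2 := (ae_restrict_iff' measurableSet_ball).1 (hgn n)
      rw [ae_iff] at h2
      convert h2 using 2
      ext y
      simp only [mem_inter_iff, mem_setOf_eq, _root_.not_imp, hgdef, ENNReal.coe_eq_zero,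
        nnnorm_eq_zero]
      tauto
    have hZ : μ {y | f y ≠ 0} = 0 := by
      have hsub : {y | f y ≠ 0} ⊆ (⋃ n, {y | f y ≠ 0} ∩ ball x (u n)) ∪ (ball x D)ᶜ := by
        intro y hy
        by_cases h : y ∈ ball x D
        · rw [← h_union] at h
          obtain ⟨n, hn'⟩ := mem_iUnion.1 h
          exact Or.inl (mem_iUnion.2 ⟨n, hy, hn'⟩)
        · exact Or.inr h
      refine le_antisymm ?_ (zero_le)
      calc μ {y | f y ≠ 0} ≤ μ ((⋃ n, {y | f y ≠ 0} ∩ ball x (u n)) ∪ (ball x D)ᶜ) :=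
            measure_mono hsub
        _ ≤ μ (⋃ n, {y | f y ≠ 0} ∩ ball x (u n)) + μ (ball x D)ᶜ := measure_union_le _ _
        _ = 0 := by rw [measure_iUnion_null hn, hcomplD, add_zero]
    have hfae : ∀ᵐ y ∂μ, f y = 0 := by
      rw [ae_iff]
      exact hZ
    refine integral_eq_zero_of_ae ?_
    filter_upwards [hfae] with y hy
    simp [hy]
  by_cases hN0 : N = 0
  · have h0 : ∀ n : ℕ, ∫⁻ y in ball x (u n), g y ∂μ = 0 := fun n =>
      le_antisymm (by simpa [hN0] using hNle (u n) (hu0 n) (huD n)) (zero_le)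
    rw [hzero h0]
    simp
  by_cases hMtop : M = ⊤
  · have hRHS : ENNReal.ofReal (1 * (1/α + p / (1 - lam - α * p))) *
        M ^ (1 - p * α / (1 - lam)) * N ^ (p * α / (1 - lam)) = ⊤ := by
      rw [hMtop, ENNReal.top_rpow_of_pos (by rw [← hθdef]; linarith)]
      have h1 : ENNReal.ofReal (1 * (1/α + p / (1 - lam - α * p))) ≠ 0 := by
        rw [Ne, ENNReal.ofReal_eq_zero, not_le]
        have h2 : 0 < p / (1 - lam - α * p) := by positivity
        have h3 : 0 < 1/α := by positivity
        nlinarith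
      have h2 : N ^ (p * α / (1 - lam)) ≠ 0 := by
        rw [Ne, ENNReal.rpow_eq_zero_iff]
        push_neg
        exact ⟨fun h => absurd h hN0, fun h => absurd h hNtop.ne⟩
      rw [ENNReal.mul_top h1, ENNReal.top_mul h2]
    rw [hRHS]; exact le_top
  by_cases hM0 : M = 0
  · have h0 : ∀ n : ℕ, ∫⁻ y in ball x (u n), g y ∂μ = 0 := fun n =>
      le_antisymm (by simpa [hM0] using hMle (u n) (hu0 n) (huD n)) (zero_le)
    rw [hzero h0]
    simp
  -- main case
  have hNtop' : N ≠ ⊤ := hNtop.ne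
  set ν : Measure X := μ.withDensity g with hνdef
  have hνball : ∀ r : ℝ, ν (ball x r) = ∫⁻ y in ball x r, g y ∂μ := fun r =>
    withDensity_apply g measurableSet_ball
  have hνM : ∀ r : ℝ, 0 < r → r < D → ν (ball x r) ≤ M * μ (ball x r) := by
    intro r h1 h2; rw [hνball]; exact hMle r h1 h2
  have hνN : ∀ r : ℝ, 0 < r → r < D → ν (ball x r) ≤ N * μ (ball x r) ^ q := by
    intro r h1 h2; rw [hνball]; exact hNle r h1 h2
  have hνuniv : ν univ = ν (ball x D) := by
    have h := measure_add_measure_compl (μ := ν) (measurableSet_ball (x := x) (ε := D))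
    have hc : ν (ball x D)ᶜ = 0 := (withDensity_absolutelyContinuous μ g) hcomplD
    rw [hc, add_zero] at h
    exact h.symm
  have humono : Monotone u := by
    intro a b hab
    have h3 : D / ((b:ℝ)+2) ≤ D / ((a:ℝ)+2) := by
      gcongr
    simp only [hudef]
    linarith
  have hνD : ν (ball x D) = ⨆ n, ν (ball x (u n)) := by
    rw [← h_union]
    exact Directed.measure_iUnion
      (Monotone.directed_le fun a b hab => ball_subset_ball (humono hab))
  have hνunivM : ν univ ≤ M * μ univ := by
    rw [hνuniv, hνD]
    exact iSup_le fun n => (hνM (u n) (hu0 n) (huD n)).trans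
      (mul_le_mul_right (measure_mono (subset_univ _)) M)
  have hνunivN : ν univ ≤ N * (μ univ) ^ q := by
    rw [hνuniv, hνD]
    exact iSup_le fun n => (hνN (u n) (hu0 n) (huD n)).trans
      (mul_le_mul_right (ENNReal.rpow_le_rpow (measure_mono (subset_univ _)) hq0.le) N)
  set φ : X → ℝ := fun y => (μ (ball x (dist x y))).toReal with hφdef
  have hφm : Measurable φ := ENNReal.measurable_toReal.comp
    (((hcont x).comp (continuous_const.dist continuous_id)).measurable)
  have hEs : ∀ s : ℝ, MeasurableSet {y | φ y ≤ s} := fun s =>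
    measurableSet_le hφm measurable_const
  have hF : ∀ s : ℝ, 0 < s → ν {y | φ y ≤ s} ≤
      min (M * ENNReal.ofReal s) (N * ENNReal.ofReal s ^ q) := by
    intro s hs
    by_cases hbig : μ univ ≤ ENNReal.ofReal s
    · have h0 : ν {y | φ y ≤ s} ≤ ν univ := measure_mono (subset_univ _)
      refine le_min ?_ ?_
      · exact (h0.trans hνunivM).trans (mul_le_mul_right hbig M)
      · exact (h0.trans hνunivN).trans
          (mul_le_mul_right (ENNReal.rpow_le_rpow hbig hq0.le) N)
    · push_neg at hbig
      set A : Set ℝ := {t | 0 < t ∧ μ (ball x t) ≤ ENNReal.ofReal s} with hAdef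
      have hAne : A.Nonempty := by
        have h0 : Filter.Tendsto (fun t : ℝ => μ (ball x t)) (nhdsWithin 0 (Ioi 0))
            (nhds 0) := by
          have h1 := ((hcont x).tendsto 0).mono_left
            (nhdsWithin_le_nhds (s := Ioi (0:ℝ)))
          have h2 : μ (ball x (0:ℝ)) = 0 := by
            rw [ball_eq_empty.2 le_rfl]; exact measure_empty
          rwa [h2] at h1
        have h1 : ∀ᶠ t in nhdsWithin 0 (Ioi 0), μ (ball x t) < ENNReal.ofReal s :=
          h0.eventually_lt_const (ENNReal.ofReal_pos.2 hs)
        obtain ⟨t, ht1, ht2⟩ := (h1.and self_mem_nhdsWithin).exists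
        exact ⟨t, ht2, ht1.le⟩
      obtain ⟨r₀, hr₀D, hr₀⟩ : ∃ r₀, r₀ < D ∧ ENNReal.ofReal s < μ (ball x r₀) := by
        have h1 : Filter.Tendsto (fun t : ℝ => μ (ball x t)) (nhdsWithin D (Iio D))
            (nhds (μ univ)) := by
          rw [← hμD]
          exact ((hcont x).tendsto D).mono_left nhdsWithin_le_nhds
        have h2 : ∀ᶠ t in nhdsWithin D (Iio D), ENNReal.ofReal s < μ (ball x t) :=
          h1.eventually_const_lt hbig
        obtain ⟨t, ht1, ht2⟩ := (h2.and self_mem_nhdsWithin).exists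
        exact ⟨t, ht2, ht1⟩
      have hAub : ∀ t ∈ A, t ≤ r₀ := by
        intro t ht
        by_contra hcon
        push_neg at hcon
        exact absurd (le_trans (measure_mono (ball_subset_ball hcon.le)) ht.2)
          (not_le.2 hr₀)
      set R : ℝ := sSup A with hRdef
      obtain ⟨t₀, ht₀⟩ := hAne
      have hR0 : 0 < R := lt_of_lt_of_le ht₀.1 (le_csSup ⟨r₀, hAub⟩ ht₀)
      have hRD : R < D := lt_of_le_of_lt (csSup_le ⟨t₀, ht₀⟩ hAub) hr₀D
      have hμR : μ (ball x R) ≤ ENNReal.ofReal s := by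
        have h1 : Filter.Tendsto (fun t : ℝ => μ (ball x t)) (nhdsWithin R (Iio R))
            (nhds (μ (ball x R))) := ((hcont x).tendsto R).mono_left nhdsWithin_le_nhds
        refine le_of_tendsto h1 ?_
        filter_upwards [self_mem_nhdsWithin] with t ht
        rcases le_or_gt t 0 with h | h
        · rw [ball_eq_empty.2 h]
          simp
        · obtain ⟨a, haA, hta⟩ := exists_lt_of_lt_csSup ⟨t₀, ht₀⟩ ht
          exact le_trans (measure_mono (ball_subset_ball hta.le)) haA.2
      have hsub : {y | φ y ≤ s} ⊆ closedBall x R := by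
        intro y hy
        rw [mem_closedBall, dist_comm]
        by_contra hcon
        push_neg at hcon
        have hd0 : 0 < dist x y := lt_trans hR0 hcon
        have hin : dist x y ∈ A :=
          ⟨hd0, (ENNReal.le_ofReal_iff_toReal_le (measure_ne_top μ _) hs.le).2 hy⟩
        exact absurd (le_csSup ⟨r₀, hAub⟩ hin) (not_le.2 hcon)
      have hlim : Filter.Tendsto (fun t : ℝ => μ (ball x t)) (nhdsWithin R (Ioi R))
          (nhds (μ (ball x R))) := ((hcont x).tendsto R).mono_left nhdsWithin_le_nhds
      have hmem : Ioo R D ∈ nhdsWithin R (Ioi R) := Ioo_mem_nhdsGT_of_mem ⟨le_refl R, hRD⟩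
      refine le_min ?_ ?_
      · have htend : Filter.Tendsto (fun t : ℝ => M * μ (ball x t)) (nhdsWithin R (Ioi R))
            (nhds (M * μ (ball x R))) := ENNReal.Tendsto.const_mul hlim (Or.inr hMtop)
        have hev : ∀ᶠ t in nhdsWithin R (Ioi R), ν {y | φ y ≤ s} ≤ M * μ (ball x t) := by
          filter_upwards [hmem] with t ht
          calc ν {y | φ y ≤ s} ≤ ν (ball x t) :=
                measure_mono (hsub.trans (closedBall_subset_ball ht.1))
            _ ≤ M * μ (ball x t) := hνM t (hR0.trans ht.1) ht.2
        exact (ge_of_tendsto htend hev).trans (mul_le_mul_right hμR M)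
      · have hrpow : Filter.Tendsto (fun t : ℝ => μ (ball x t) ^ q) (nhdsWithin R (Ioi R))
            (nhds (μ (ball x R) ^ q)) :=
          (ENNReal.continuous_rpow_const.tendsto _).comp hlim
        have htend : Filter.Tendsto (fun t : ℝ => N * μ (ball x t) ^ q)
            (nhdsWithin R (Ioi R)) (nhds (N * μ (ball x R) ^ q)) :=
          ENNReal.Tendsto.const_mul hrpow (Or.inr hNtop')
        have hev : ∀ᶠ t in nhdsWithin R (Ioi R),
            ν {y | φ y ≤ s} ≤ N * μ (ball x t) ^ q := by
          filter_upwards [hmem] with t ht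
          calc ν {y | φ y ≤ s} ≤ ν (ball x t) :=
                measure_mono (hsub.trans (closedBall_subset_ball ht.1))
            _ ≤ N * μ (ball x t) ^ q := hνN t (hR0.trans ht.1) ht.2
        exact (ge_of_tendsto htend hev).trans
          (mul_le_mul_right (ENNReal.rpow_le_rpow hμR hq0.le) N)
  have hae : ∀ᵐ y ∂μ, y ≠ x := by
    rw [ae_iff]
    have h : {y : X | ¬ y ≠ x} = {x} := by ext y; simp
    rw [h]; exact hatom x
  have key : (‖potentialT μ α f x‖₊ : ℝ≥0∞) ≤ ENNReal.ofReal (1 - α) *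
      ∫⁻ s in Ioi (0:ℝ), ENNReal.ofReal (s ^ (α - 2)) * ν {y | φ y ≤ s} := by
    have step0 : (‖potentialT μ α f x‖₊ : ℝ≥0∞) ≤
        ∫⁻ y, g y * (μ (ball x (dist x y))) ^ (α - 1) ∂μ := by
      refine (enorm_integral_le_lintegral_enorm _).trans (lintegral_mono fun y => ?_)
      rw [enorm_mul]
      refine mul_le_mul_right ?_ _
      rw [Real.enorm_eq_ofReal ENNReal.toReal_nonneg]
      exact ENNReal.ofReal_toReal_le
    refine step0.trans ?_
    refine le_of_eq ?_
    have step1 : (fun y => g y * (μ (ball x (dist x y))) ^ (α - 1)) =ᵐ[μ]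
        (fun y => ENNReal.ofReal (1 - α) *
          ∫⁻ s in Ioi (0:ℝ), g y *
            (ENNReal.ofReal (s ^ (α - 2)) * (Ici (φ y)).indicator 1 s)) := by
      filter_upwards [hae] with y hy
      have hd : 0 < dist x y := dist_pos.2 (Ne.symm hy)
      have hb0 : μ (ball x (dist x y)) ≠ 0 := (hball x _ hd).1.ne'
      rw [hedberg_aux_layercake hb0 (measure_ne_top μ _) hα1,
        lintegral_const_mul' (g y) _ (by simp [hgdef] : g y ≠ ⊤)]
      ring
    rw [lintegral_congr_ae step1, lintegral_const_mul' _ _ ENNReal.ofReal_ne_top]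
    congr 1
    have hmeas : AEMeasurable (Function.uncurry fun (y : X) (s : ℝ) =>
        g y * (ENNReal.ofReal (s ^ (α - 2)) * (Ici (φ y)).indicator 1 s))
        (μ.prod (volume.restrict (Ioi 0))) := by
      have heq : (Function.uncurry fun (y : X) (s : ℝ) =>
          g y * (ENNReal.ofReal (s ^ (α - 2)) * (Ici (φ y)).indicator 1 s)) =
          fun pr : X × ℝ => g pr.1 * (ENNReal.ofReal (pr.2 ^ (α - 2)) *
            {pr : X × ℝ | φ pr.1 ≤ pr.2}.indicator 1 pr) := by
        funext pr
        simp only [Function.uncurry, Set.indicator_apply, mem_Ici, mem_setOf_eq,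
          Pi.one_apply]
      rw [heq]
      have hS : MeasurableSet {pr : X × ℝ | φ pr.1 ≤ pr.2} :=
        measurableSet_le (hφm.comp measurable_fst) measurable_snd
      have hrpm : Measurable fun pr : X × ℝ => ENNReal.ofReal (pr.2 ^ (α - 2)) :=
        (hedberg_aux_meas (α - 2)).comp measurable_snd
      exact ((hg.comp measurable_fst).mul
        (hrpm.mul (measurable_const.indicator hS))).aemeasurable
    rw [lintegral_lintegral_swap hmeas]
    refine lintegral_congr fun s => ?_
    have hpt : ∀ y, g y * (ENNReal.ofReal (s ^ (α - 2)) * (Ici (φ y)).indicator 1 s) =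
        ENNReal.ofReal (s ^ (α - 2)) * ({y | φ y ≤ s}).indicator g y := by
      intro y
      by_cases h : φ y ≤ s
      · simp only [Set.indicator_apply, mem_Ici, mem_setOf_eq, h, if_true, Pi.one_apply]
        ring
      · simp [Set.indicator_apply, h]
    simp_rw [hpt]
    rw [lintegral_const_mul' _ _ ENNReal.ofReal_ne_top, lintegral_indicator (hEs s),
      ← withDensity_apply g (hEs s)]
  -- choose the threshold T and estimate the two pieces
  have hM' : 0 < M.toReal := ENNReal.toReal_pos hM0 hMtop
  have hN' : 0 < N.toReal := ENNReal.toReal_pos hN0 hNtop'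
  set M' : ℝ := M.toReal with hM'def
  set N' : ℝ := N.toReal with hN'def
  set T : ℝ := (N' / M') ^ (p / (1 - lam)) with hTdef
  have hTpos : 0 < T := Real.rpow_pos_of_pos (div_pos hN' hM') _
  set β : ℝ := α - 2 + q with hβdef
  have hβ1 : β + 1 = α - (1 - lam) / p := by rw [hβdef, hqdef]; ring
  have hβneg : α - (1 - lam) / p < 0 := by rw [sub_neg]; exact hαp
  have hβlt : β < -1 := by linarith
  have hnear : ∫⁻ s in Ioc (0:ℝ) T, ENNReal.ofReal (s ^ (α - 2)) * ν {y | φ y ≤ s}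
      ≤ M * ENNReal.ofReal (T ^ α / α) := by
    have h1 : ∫⁻ s in Ioc (0:ℝ) T, ENNReal.ofReal (s ^ (α - 2)) * ν {y | φ y ≤ s}
        ≤ ∫⁻ s in Ioc (0:ℝ) T, M * ENNReal.ofReal (s ^ (α - 1)) := by
      refine setLIntegral_mono ((hedberg_aux_meas (α - 1)).const_mul M) fun s hs => ?_
      have hs0 : 0 < s := hs.1
      calc ENNReal.ofReal (s ^ (α - 2)) * ν {y | φ y ≤ s}
          ≤ ENNReal.ofReal (s ^ (α - 2)) * (M * ENNReal.ofReal s) :=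
            mul_le_mul_right ((hF s hs0).trans (min_le_left _ _)) _
        _ = M * (ENNReal.ofReal (s ^ (α - 2)) * ENNReal.ofReal s) := by ring
        _ = M * ENNReal.ofReal (s ^ (α - 1)) := by
            rw [← ENNReal.ofReal_mul (Real.rpow_nonneg hs0.le _)]
            congr 1
            rw [show α - 1 = α - 2 + 1 by ring, Real.rpow_add_one hs0.ne']
    refine h1.trans ?_
    rw [lintegral_const_mul' M _ hMtop,
      hedberg_aux_Ioc_rpow (by linarith : (-1:ℝ) < α - 1) hTpos,
      show α - 1 + 1 = α by ring]
  have hfar : ∫⁻ s in Ioi T, ENNReal.ofReal (s ^ (α - 2)) * ν {y | φ y ≤ s}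
      ≤ N * ENNReal.ofReal (-T ^ (β + 1) / (β + 1)) := by
    have h1 : ∫⁻ s in Ioi T, ENNReal.ofReal (s ^ (α - 2)) * ν {y | φ y ≤ s}
        ≤ ∫⁻ s in Ioi T, N * ENNReal.ofReal (s ^ β) := by
      refine setLIntegral_mono ((hedberg_aux_meas β).const_mul N) fun s hs => ?_
      have hs0 : 0 < s := hTpos.trans hs
      calc ENNReal.ofReal (s ^ (α - 2)) * ν {y | φ y ≤ s}
          ≤ ENNReal.ofReal (s ^ (α - 2)) * (N * ENNReal.ofReal s ^ q) :=
            mul_le_mul_right ((hF s hs0).trans (min_le_right _ _)) _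
        _ = N * (ENNReal.ofReal (s ^ (α - 2)) * ENNReal.ofReal s ^ q) := by ring
        _ = N * ENNReal.ofReal (s ^ β) := by
            rw [ENNReal.ofReal_rpow_of_pos hs0,
              ← ENNReal.ofReal_mul (Real.rpow_nonneg hs0.le _),
              ← Real.rpow_add hs0, hβdef]
    refine h1.trans ?_
    rw [lintegral_const_mul' N _ hNtop', hedberg_aux_Ioi_rpow hβlt hTpos]
  have hsplit : ∫⁻ s in Ioi (0:ℝ), ENNReal.ofReal (s ^ (α - 2)) * ν {y | φ y ≤ s} ≤
      M * ENNReal.ofReal (T ^ α / α) + N * ENNReal.ofReal (-T ^ (β + 1) / (β + 1)) := by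
    rw [show Ioi (0:ℝ) = Ioc (0:ℝ) T ∪ Ioi T from (Ioc_union_Ioi_eq_Ioi hTpos.le).symm,
      lintegral_union measurableSet_Ioi Ioc_disjoint_Ioi_same]
    exact add_le_add hnear hfar
  -- the closing real-number computation
  have hdiv : 0 < p / (1 - lam - α * p) := by positivity
  have hnear0 : (0:ℝ) ≤ T ^ α / α := by positivity
  have hfar0 : (0:ℝ) ≤ -T ^ (β + 1) / (β + 1) := by
    rw [div_nonneg_iff]
    right
    constructor
    · nlinarith [Real.rpow_pos_of_pos hTpos (β + 1)]
    · linarith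
  have hθT1 : T ^ α = (N' / M') ^ θ := by
    rw [hTdef, ← Real.rpow_mul (div_pos hN' hM').le,
      show p / (1 - lam) * α = θ by rw [hθdef]; ring]
  have hθT2 : T ^ (β + 1) = (N' / M') ^ (θ - 1) := by
    rw [hTdef, ← Real.rpow_mul (div_pos hN' hM').le, hβ1]
    congr 1
    rw [hθdef]
    field_simp
  have hMθ : M' ^ (1 - θ) = M' / M' ^ θ := by
    rw [Real.rpow_sub hM', Real.rpow_one]
  have hNθ : N' ^ θ = N' * N' ^ (θ - 1) := by
    have h := Real.rpow_add hN' 1 (θ - 1)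
    rw [show (1:ℝ) + (θ - 1) = θ by ring, Real.rpow_one] at h
    exact h
  have hE1 : M' * T ^ α = M' ^ (1 - θ) * N' ^ θ := by
    rw [hθT1, Real.div_rpow hN'.le hM'.le, hMθ]
    have := Real.rpow_pos_of_pos hM' θ
    field_simp
  have hE2 : N' * T ^ (β + 1) = M' ^ (1 - θ) * N' ^ θ := by
    rw [hθT2, Real.div_rpow hN'.le hM'.le, hMθ, hNθ]
    have h1 := Real.rpow_pos_of_pos hM' θ
    have h2 := Real.rpow_pos_of_pos hM' (θ - 1)
    have h3 : M' ^ θ = M' * M' ^ (θ - 1) := by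
      have h := Real.rpow_add hM' 1 (θ - 1)
      rw [show (1:ℝ) + (θ - 1) = θ by ring, Real.rpow_one] at h
      exact h
    rw [h3]
    field_simp
  have hc2 : ∀ y : ℝ, -y / (β + 1) = y * (p / (1 - lam - α * p)) := by
    intro y
    have hne : α - (1 - lam) / p ≠ 0 := ne_of_lt hβneg
    rw [hβ1, div_eq_iff hne]
    have hγ' : 1 - lam - α * p ≠ 0 := hγ.ne'
    have e : p / (1 - lam - α * p) * (α - (1 - lam) / p) = -1 := by
      rw [div_mul_eq_mul_div, div_eq_iff hγ']
      have hk : p * ((1 - lam) / p) = 1 - lam := by field_simp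
      linear_combination -hk
    rw [mul_assoc, e]
    ring
  have hreal : (1 - α) * (M' * (T ^ α / α) + N' * (-T ^ (β + 1) / (β + 1))) ≤
      1 * (1/α + p / (1 - lam - α * p)) * M' ^ (1 - θ) * N' ^ θ := by
    have hL1 : M' * (T ^ α / α) = M' ^ (1 - θ) * N' ^ θ * (1 / α) := by
      rw [← hE1]; ring
    have hL2 : N' * (-T ^ (β + 1) / (β + 1)) =
        M' ^ (1 - θ) * N' ^ θ * (p / (1 - lam - α * p)) := by
      rw [hc2, ← mul_assoc, hE2]
    rw [hL1, hL2]
    have hEpos : 0 < M' ^ (1 - θ) * N' ^ θ :=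
      mul_pos (Real.rpow_pos_of_pos hM' _) (Real.rpow_pos_of_pos hN' _)
    have hFpos : 0 ≤ M' ^ (1 - θ) * N' ^ θ * (1 / α) +
        M' ^ (1 - θ) * N' ^ θ * (p / (1 - lam - α * p)) := by positivity
    nlinarith [mul_nonneg hα.le hFpos]
  have hfinal : ENNReal.ofReal (1 - α) *
      (M * ENNReal.ofReal (T ^ α / α) + N * ENNReal.ofReal (-T ^ (β + 1) / (β + 1))) ≤
      ENNReal.ofReal (1 * (1/α + p / (1 - lam - α * p))) * M ^ (1 - θ) * N ^ θ := by
    have hMeq : M = ENNReal.ofReal M' := (ENNReal.ofReal_toReal hMtop).symm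
    have hNeq : N = ENNReal.ofReal N' := (ENNReal.ofReal_toReal hNtop').symm
    rw [hMeq, hNeq, ← ENNReal.ofReal_mul hM'.le, ← ENNReal.ofReal_mul hN'.le,
      ← ENNReal.ofReal_add (mul_nonneg hM'.le hnear0) (mul_nonneg hN'.le hfar0),
      ← ENNReal.ofReal_mul (by linarith : (0:ℝ) ≤ 1 - α),
      ENNReal.ofReal_rpow_of_pos hM', ENNReal.ofReal_rpow_of_pos hN',
      ← ENNReal.ofReal_mul (by positivity),
      ← ENNReal.ofReal_mul (by positivity)]
    exact ENNReal.ofReal_le_ofReal hreal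
  calc (‖potentialT μ α f x‖₊ : ℝ≥0∞)
      ≤ ENNReal.ofReal (1 - α) *
        ∫⁻ s in Ioi (0:ℝ), ENNReal.ofReal (s ^ (α - 2)) * ν {y | φ y ≤ s} := key
    _ ≤ ENNReal.ofReal (1 - α) *
        (M * ENNReal.ofReal (T ^ α / α) + N * ENNReal.ofReal (-T ^ (β + 1) / (β + 1))) :=
        mul_le_mul_right hsplit _
    _ ≤ ENNReal.ofReal (1 * (1/α + p / (1 - lam - α * p))) * M ^ (1 - θ) * N ^ θ := hfinal
end
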